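/- arXiv:0707.0538 — 8 statements merged into one kernel-verified Lean document; each statement's English description precedes it below -/
import Mathlib

section
/- Let 0 < α < 2, let λ be a nonzero finite measure on the unit sphere S of ℝ^d, and let ν(B) = ∫_S λ(dξ) ∫_0^∞ 1_B(rξ) r^{-α-1} dr (the Lévy measure of an α-stable law). Then its dual ν' (defined by ν'(B) = ∫ 1_B(x/|x|²)|x|² ν(dx)) satisfies ν'(B) = ∫_S λ(dξ) ∫_0^∞ 1_B(uξ) u^{-(2-α)-1} du; that is, ν' is the Lévy measure of a (2-α)-stable law with the same spherical measure λ. -/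
open MeasureTheory Set ENNReal

/-- The dual of the Lévy measure of an `α`-stable law (`0 < α < 2`) with spherical
measure `λ` is the Lévy measure of a `(2-α)`-stable law with the same spherical measure. -/
theorem stmt_7 {d : ℕ} (α : ℝ) (hα : 0 < α) (hα2 : α < 2)
    (lam : Measure (EuclideanSpace ℝ (Fin d)))
    (hlamfin : IsFiniteMeasure lam) (hlamne : lam ≠ 0)
    (hlamS : lam {ξ : EuclideanSpace ℝ (Fin d) | ‖ξ‖ = 1}ᶜ = 0)
    (ν ν' : Measure (EuclideanSpace ℝ (Fin d)))
    (hν : ∀ B : Set (EuclideanSpace ℝ (Fin d)), MeasurableSet B →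
      ν B = ∫⁻ ξ, (∫⁻ r in Ioi (0 : ℝ),
        B.indicator (fun _ => (1 : ℝ≥0∞)) (r • ξ) * ENNReal.ofReal (r ^ (-α - 1))) ∂lam)
    (hdual : ∀ B : Set (EuclideanSpace ℝ (Fin d)), MeasurableSet B →
      ν' B = ∫⁻ x in ({0}ᶜ : Set (EuclideanSpace ℝ (Fin d))),
        B.indicator (fun _ => (1 : ℝ≥0∞)) ((‖x‖ ^ 2)⁻¹ • x) * (‖x‖₊ : ℝ≥0∞) ^ 2 ∂ν) :
    ∀ B : Set (EuclideanSpace ℝ (Fin d)), MeasurableSet B →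
      ν' B = ∫⁻ ξ, (∫⁻ u in Ioi (0 : ℝ),
        B.indicator (fun _ => (1 : ℝ≥0∞)) (u • ξ) *
          ENNReal.ofReal (u ^ (-(2 - α) - 1))) ∂lam := by
  classical
  -- the radial measure
  set ρ : Measure ℝ := (volume.restrict (Ioi (0:ℝ))).withDensity
      (fun r => ENNReal.ofReal (r ^ (-α - 1))) with hρdef
  set μ : Measure (EuclideanSpace ℝ (Fin d)) := (lam.prod ρ).map (fun p : EuclideanSpace ℝ (Fin d) × ℝ => p.2 • p.1) with hμdef
  have hsmul : Measurable (fun p : EuclideanSpace ℝ (Fin d) × ℝ => p.2 • p.1) :=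
    measurable_snd.smul measurable_fst
  have hdens : Measurable (fun r : ℝ => ENNReal.ofReal (r ^ (-α - 1))) :=
    by measurability
  -- μ agrees with the formula for ν
  have hμ_apply : ∀ B : Set (EuclideanSpace ℝ (Fin d)), MeasurableSet B →
      μ B = ∫⁻ ξ, (∫⁻ r in Ioi (0 : ℝ),
        B.indicator (fun _ => (1 : ℝ≥0∞)) (r • ξ) * ENNReal.ofReal (r ^ (-α - 1))) ∂lam := by
    intro B hB
    rw [hμdef, Measure.map_apply hsmul hB, Measure.prod_apply (hsmul hB)]
    refine lintegral_congr fun ξ => ?_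
    have hTm : MeasurableSet ((fun r : ℝ => r • ξ) ⁻¹' B) :=
      (measurable_id.smul_const ξ) hB
    rw [hρdef]
    have : Prod.mk ξ ⁻¹' ((fun p : EuclideanSpace ℝ (Fin d) × ℝ => p.2 • p.1) ⁻¹' B)
        = (fun r : ℝ => r • ξ) ⁻¹' B := rfl
    rw [this, withDensity_apply _ hTm, ← lintegral_indicator hTm]
    refine lintegral_congr fun r => ?_
    by_cases h : r • ξ ∈ B
    · simp [Set.indicator_of_mem, h, Set.mem_preimage.mpr h]
    · simp [Set.indicator_of_notMem, h]
  have hνμ : ν = μ := Measure.ext fun B hB => (hν B hB).trans (hμ_apply B hB).symm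
  -- a.e. on the sphere
  have hae : ∀ᵐ ξ ∂lam, ‖ξ‖ = 1 := by
    rw [ae_iff]
    exact hlamS
  intro B hB
  rw [hdual B hB, hνμ]
  -- the integrand g
  set g : EuclideanSpace ℝ (Fin d) → ℝ≥0∞ := fun x =>
    B.indicator (fun _ => (1 : ℝ≥0∞)) ((‖x‖ ^ 2)⁻¹ • x) * (‖x‖₊ : ℝ≥0∞) ^ 2 with hgdef
  have hgm : Measurable g := by
    apply Measurable.mul
    · exact (measurable_one.indicator hB).comp
        ((measurable_norm.pow_const 2).inv.smul measurable_id)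
    · exact (measurable_nnnorm.coe_nnreal_ennreal).pow_const 2
  -- μ {0} = 0
  have hμ0 : μ {0} = 0 := by
    rw [hμ_apply {0} (measurableSet_singleton 0)]
    have h0 : ∀ᵐ ξ ∂lam, (∫⁻ r in Ioi (0 : ℝ),
        ({0} : Set (EuclideanSpace ℝ (Fin d))).indicator (fun _ => (1 : ℝ≥0∞)) (r • ξ) *
          ENNReal.ofReal (r ^ (-α - 1))) = 0 := by
      refine hae.mono fun ξ hξ => ?_
      have hz : ∀ r ∈ Ioi (0:ℝ), ({0} : Set (EuclideanSpace ℝ (Fin d))).indicator (fun _ => (1 : ℝ≥0∞)) (r • ξ) *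
          ENNReal.ofReal (r ^ (-α - 1)) = 0 := by
        intro r hr
        have hξ0 : ξ ≠ 0 := by
          intro h; rw [h] at hξ; simp at hξ
        have : r • ξ ≠ 0 := smul_ne_zero (ne_of_gt hr) hξ0
        rw [Set.indicator_of_notMem (by simpa using this), zero_mul]
      rw [setLIntegral_congr_fun measurableSet_Ioi hz,
        lintegral_zero]
    rw [lintegral_congr_ae h0, lintegral_zero]
  have hrestrict : μ.restrict ({0}ᶜ : Set (EuclideanSpace ℝ (Fin d))) = μ := by
    rw [Measure.restrict_eq_self_of_ae_mem]
    rw [ae_iff]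
    simpa using hμ0
  rw [hrestrict, hμdef, lintegral_map hgm hsmul, lintegral_prod (fun p : EuclideanSpace ℝ (Fin d) × ℝ => g (p.2 • p.1)) ((hgm.comp hsmul).aemeasurable)]
  refine lintegral_congr_ae (hae.mono fun ξ hξ => ?_)
  show (∫⁻ y : ℝ, g (y • ξ)
      ∂((volume.restrict (Ioi (0:ℝ))).withDensity (fun r => ENNReal.ofReal (r ^ (-α - 1)))))
    = ∫⁻ u in Ioi (0:ℝ), B.indicator (fun _ => (1:ℝ≥0∞)) (u • ξ) *
        ENNReal.ofReal (u ^ (-(2 - α) - 1))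
  -- now fixed ξ with ‖ξ‖ = 1
  have hgsm : Measurable fun r : ℝ => g (r • ξ) := hgm.comp (measurable_id.smul_const ξ)
  have hwd := lintegral_withDensity_eq_lintegral_mul (volume.restrict (Ioi (0:ℝ))) hdens hgsm
  simp only [Pi.mul_apply] at hwd
  rw [hwd]
  -- change of variables u = r⁻¹ on Ioi 0
  have hinv : ∀ x ∈ Ioi (0:ℝ), HasFDerivWithinAt (fun y : ℝ => y⁻¹)
      ((1 : ℝ →L[ℝ] ℝ).smulRight (-(x^2)⁻¹)) (Ioi 0) x := fun x hx =>
    ((hasDerivAt_inv (ne_of_gt hx)).hasDerivWithinAt).hasFDerivWithinAt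
  have himg : (fun y : ℝ => y⁻¹) '' Ioi 0 = Ioi 0 := by
    ext u
    constructor
    · rintro ⟨r, hr, rfl⟩; exact mem_Ioi.mpr (inv_pos.mpr (mem_Ioi.mp hr))
    · intro hu; exact ⟨u⁻¹, mem_Ioi.mpr (inv_pos.mpr hu), inv_inv u⟩
  have hinj : InjOn (fun y : ℝ => y⁻¹) (Ioi 0) := inv_injective.injOn
  have key := lintegral_image_eq_lintegral_abs_det_fderiv_mul volume measurableSet_Ioi
      hinv hinj (fun u => B.indicator (fun _ => (1 : ℝ≥0∞)) (u • ξ) *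
          ENNReal.ofReal (u ^ (-(2 - α) - 1)))
  rw [himg] at key
  rw [key]
  refine setLIntegral_congr_fun measurableSet_Ioi (fun r hr => ?_)
  have hr0 : (0:ℝ) < r := hr
  -- compute g (r • ξ)
  have hnorm : ‖r • ξ‖ = r := by
    rw [norm_smul, hξ, Real.norm_eq_abs, abs_of_pos hr0, mul_one]
  have hpoint : ((‖r • ξ‖:ℝ) ^ 2)⁻¹ • (r • ξ) = r⁻¹ • ξ := by
    rw [hnorm, smul_smul]
    congr 1
    field_simp
  have hnn : (‖r • ξ‖₊ : ℝ≥0∞) ^ 2 = ENNReal.ofReal (r ^ (2:ℝ)) := by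
    rw [show (‖r • ξ‖₊ : ℝ≥0∞) = ENNReal.ofReal ‖r • ξ‖ from (ofReal_norm (r • ξ)).symm, hnorm, ← ENNReal.ofReal_pow hr0.le,
      ← Real.rpow_natCast r 2]
    norm_num
  rw [hgdef]
  simp only [ContinuousLinearMap.smulRight_one_eq_toSpanSingleton, ContinuousLinearMap.det_toSpanSingleton, hpoint, hnn]
  rw [abs_neg, abs_inv, abs_of_pos (pow_pos hr0 2)]
  -- now pure arithmetic in ℝ≥0∞ / rpow
  have hsc : ENNReal.ofReal (r ^ (-α-1)) * ENNReal.ofReal (r ^ (2:ℝ))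
      = ENNReal.ofReal ((r^2)⁻¹) * ENNReal.ofReal (r⁻¹ ^ (-(2-α)-1)) := by
    rw [← ENNReal.ofReal_mul (by positivity), ← ENNReal.ofReal_mul (by positivity)]
    congr 1
    have h2 : (r:ℝ)^2 = r ^ ((2:ℕ):ℝ) := (Real.rpow_natCast r 2).symm
    rw [Real.inv_rpow hr0.le, ← Real.rpow_neg hr0.le, h2, ← Real.rpow_neg hr0.le,
      ← Real.rpow_add hr0, ← Real.rpow_add hr0]
    congr 1
    ring
  rw [show ENNReal.ofReal (r ^ (-α-1)) * (B.indicator (fun _ => (1:ℝ≥0∞)) (r⁻¹ • ξ) *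
        ENNReal.ofReal (r ^ (2:ℝ)))
      = B.indicator (fun _ => (1:ℝ≥0∞)) (r⁻¹ • ξ) *
        (ENNReal.ofReal (r ^ (-α-1)) * ENNReal.ofReal (r ^ (2:ℝ))) by ring, hsc]
  ring
end

section
/- Let -∞ ≤ A' < B' ≤ ∞ and let G : (A',B') → ℝ be increasing, right-continuous, not constant, with A = inf G, B = sup G, and F(s) = inf{u ∈ (A',B') : G(u) > s} for s ∈ (A,B). Then G(u) = inf{s ∈ (A,B) : F(s) > u} for all u ∈ (A',B'), with the convention inf ∅ = B. -/
open MeasureTheory Set ENNReal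

/-- `G` is recovered from its generalized inverse `F`:
`G(u) = inf{s ∈ (A,B) : F(s) > u}` with the convention `inf ∅ = B`. -/
theorem stmt_11 (A' B' : EReal) (hA'B' : A' < B') (G : ℝ → ℝ)
    (hmono : MonotoneOn G {u : ℝ | A' < (u : EReal) ∧ (u : EReal) < B'})
    (hrc : ∀ u : ℝ, A' < (u : EReal) → (u : EReal) < B' →
      ContinuousWithinAt G ({u : ℝ | A' < (u : EReal) ∧ (u : EReal) < B'} ∩ Ici u) u)
    (hnc : ∃ u v : ℝ, (A' < (u : EReal) ∧ (u : EReal) < B') ∧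
      (A' < (v : EReal) ∧ (v : EReal) < B') ∧ G u ≠ G v)
    (A B : EReal)
    (hA : A = sInf {x : EReal | ∃ u : ℝ,
      (A' < (u : EReal) ∧ (u : EReal) < B') ∧ x = (G u : EReal)})
    (hB : B = sSup {x : EReal | ∃ u : ℝ,
      (A' < (u : EReal) ∧ (u : EReal) < B') ∧ x = (G u : EReal)})
    (F : ℝ → ℝ)
    (hF : ∀ s : ℝ, A < (s : EReal) → (s : EReal) < B →
      F s = sInf {u : ℝ | (A' < (u : EReal) ∧ (u : EReal) < B') ∧ s < G u}) :
    ∀ u : ℝ, A' < (u : EReal) → (u : EReal) < B' →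
      (G u : EReal) = sInf ({x : EReal | ∃ s : ℝ,
        (A < (s : EReal) ∧ (s : EReal) < B) ∧ u < F s ∧ x = (s : EReal)} ∪ {B}) := by
  intro u hu1 hu2
  set I := {u : ℝ | A' < (u : EReal) ∧ (u : EReal) < B'} with hI
  have huI : u ∈ I := ⟨hu1, hu2⟩
  have hGuB : (G u : EReal) ≤ B := by rw [hB]; exact le_sSup ⟨u, huI, rfl⟩
  have hAGu : A ≤ (G u : EReal) := by rw [hA]; exact sInf_le ⟨u, huI, rfl⟩
  apply le_antisymm
  · apply le_sInf
    rintro x (⟨s, ⟨hAs, hsB⟩, husF, rfl⟩ | rfl)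
    · by_contra h
      push_neg at h
      have hsGu : s < G u := by exact_mod_cast h
      obtain ⟨x, ⟨w, hwI, rfl⟩, hws⟩ : ∃ x ∈ {x : EReal | ∃ u : ℝ,
          (A' < (u : EReal) ∧ (u : EReal) < B') ∧ x = (G u : EReal)}, x < (s : EReal) := by
        rw [hA] at hAs; exact sInf_lt_iff.mp hAs
      have hws' : G w < s := by exact_mod_cast hws
      have hbdd : BddBelow {v : ℝ | (A' < (v : EReal) ∧ (v : EReal) < B') ∧ s < G v} := by
        refine ⟨w, fun v hv => ?_⟩
        by_contra hvw
        push_neg at hvw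
        exact absurd (hmono hv.1 hwI hvw.le) (by linarith [hv.2])
      have hFu : F s ≤ u := by
        rw [hF s hAs hsB]
        exact csInf_le hbdd ⟨huI, hsGu⟩
      linarith
    · exact hGuB
  · rcases eq_or_lt_of_le hGuB with heq | hlt
    · rw [← heq]; exact sInf_le (Or.inr rfl)
    · by_contra hcon
      push_neg at hcon
      set m := min (sInf ({x : EReal | ∃ s : ℝ,
        (A < (s : EReal) ∧ (s : EReal) < B) ∧ u < F s ∧ x = (s : EReal)} ∪ {B})) B with hm
      have hGum : (G u : EReal) < m := lt_min hcon hlt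
      obtain ⟨s, hs1, hs2⟩ := EReal.exists_between_coe_real hGum
      have hsB : (s : EReal) < B := hs2.trans_le (min_le_right _ _)
      have hAs : A < (s : EReal) := hAGu.trans_lt hs1
      have hGus : G u < s := by exact_mod_cast hs1
      -- T nonempty
      obtain ⟨x, ⟨w, hwI, rfl⟩, hsw⟩ : ∃ x ∈ {x : EReal | ∃ u : ℝ,
          (A' < (u : EReal) ∧ (u : EReal) < B') ∧ x = (G u : EReal)}, (s : EReal) < x := by
        rw [hB] at hsB; exact lt_sSup_iff.mp hsB
      have hsw' : s < G w := by exact_mod_cast hsw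
      -- right continuity gives ε
      have hct := hrc u hu1 hu2
      have hev : {v : ℝ | G v < s} ∈ nhdsWithin u (I ∩ Ici u) :=
        hct (IsOpen.mem_nhds isOpen_Iio hGus)
      obtain ⟨ε, hε, hball⟩ := Metric.mem_nhdsWithin_iff.mp hev
      have huFs : u < F s := by
        rw [hF s hAs hsB]
        have : u + ε ≤ sInf {v : ℝ | (A' < (v : EReal) ∧ (v : EReal) < B') ∧ s < G v} := by
          refine le_csInf ⟨w, ⟨hwI, hsw'⟩⟩ ?_
          rintro v ⟨hvI, hsv⟩
          by_contra hvu
          push_neg at hvu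
          have hvgtu : u < v := by
            by_contra hvu'
            push_neg at hvu'
            exact absurd (hmono hvI huI hvu') (by linarith)
          have : v ∈ Metric.ball u ε ∩ (I ∩ Ici u) := by
            refine ⟨?_, hvI, hvgtu.le⟩
            rw [Metric.mem_ball, Real.dist_eq, abs_of_pos (by linarith)]
            linarith
          exact absurd (hball this) (by simp; linarith)
        linarith
      have : sInf ({x : EReal | ∃ s : ℝ,
          (A < (s : EReal) ∧ (s : EReal) < B) ∧ u < F s ∧ x = (s : EReal)} ∪ {B})
          ≤ (s : EReal) := sInf_le (Or.inl ⟨s, ⟨hAs, hsB⟩, huFs, rfl⟩)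
      exact absurd (this.trans_lt (hs2.trans_le (min_le_left _ _))) (lt_irrefl _)
end

section
/- Let G : (A',B') → ℝ be increasing, right-continuous, not constant, with A = inf G, B = sup G, and F(s) = inf{u : G(u) > s} for s ∈ (A,B). Then for every nonnegative measurable function h on (A',B'), ∫_{(A',B')} h(u) dG(u) = ∫_{(A,B)} h(F(s)) ds, where dG denotes the Lebesgue–Stieltjes measure of G. -/
open MeasureTheory Set ENNReal Filter Topology

private lemma aux_indicator_iUnion {g : ℝ → ℝ≥0∞} {S : ℕ → Set ℝ} :
    (fun x => ⨆ n, (S n).indicator g x) = (⋃ n, S n).indicator g := by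
  funext x
  by_cases hx : x ∈ ⋃ n, S n
  · rcases mem_iUnion.1 hx with ⟨n, hn⟩
    rw [indicator_of_mem hx]
    refine le_antisymm (iSup_le fun m => ?_) (le_iSup_of_le n (by rw [indicator_of_mem hn]))
    by_cases hm : x ∈ S m
    · rw [indicator_of_mem hm]
    · simp [indicator_of_notMem hm]
  · rw [indicator_of_notMem hx]
    refine le_antisymm (iSup_le fun m => ?_) zero_le
    rw [indicator_of_notMem (fun hm => hx (mem_iUnion.2 ⟨m, hm⟩))]

private lemma aux_sup (μ : Measure ℝ) {g : ℝ → ℝ≥0∞} (hg : Measurable g) {S : ℕ → Set ℝ}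
    (hSm : ∀ n, MeasurableSet (S n)) (hmonoS : Monotone S) :
    ∫⁻ x in ⋃ n, S n, g x ∂μ = ⨆ n, ∫⁻ x in S n, g x ∂μ := by
  rw [← lintegral_indicator (MeasurableSet.iUnion hSm), ← aux_indicator_iUnion,
    lintegral_iSup (fun n => hg.indicator (hSm n))
      (fun m n hmn x => indicator_le_indicator_of_subset (hmonoS hmn) (fun _ => zero_le) x)]
  simp_rw [lintegral_indicator (hSm _)]

/-- Change of variables for the Lebesgue–Stieltjes measure of `G`:
`∫_{(A',B')} h(u) dG(u) = ∫_{(A,B)} h(F(s)) ds` where `F` is the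
generalized inverse of `G`. -/
theorem stmt_12 (A' B' : EReal) (hA'B' : A' < B') (G : ℝ → ℝ)
    (hmono : MonotoneOn G {u : ℝ | A' < (u : EReal) ∧ (u : EReal) < B'})
    (hrc : ∀ u : ℝ, A' < (u : EReal) → (u : EReal) < B' →
      ContinuousWithinAt G ({u : ℝ | A' < (u : EReal) ∧ (u : EReal) < B'} ∩ Ici u) u)
    (hnc : ∃ u v : ℝ, (A' < (u : EReal) ∧ (u : EReal) < B') ∧
      (A' < (v : EReal) ∧ (v : EReal) < B') ∧ G u ≠ G v)
    (A B : EReal)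
    (hA : A = sInf {x : EReal | ∃ u : ℝ,
      (A' < (u : EReal) ∧ (u : EReal) < B') ∧ x = (G u : EReal)})
    (hB : B = sSup {x : EReal | ∃ u : ℝ,
      (A' < (u : EReal) ∧ (u : EReal) < B') ∧ x = (G u : EReal)})
    (F : ℝ → ℝ)
    (hF : ∀ s : ℝ, A < (s : EReal) → (s : EReal) < B →
      F s = sInf {u : ℝ | (A' < (u : EReal) ∧ (u : EReal) < B') ∧ s < G u})
    (μG : Measure ℝ)
    (hμG : ∀ u v : ℝ, A' < (u : EReal) → u ≤ v → (v : EReal) < B' →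
      μG (Ioc u v) = ENNReal.ofReal (G v - G u))
    (h : ℝ → ℝ≥0∞) (hh : Measurable h) :
    ∫⁻ u in {u : ℝ | A' < (u : EReal) ∧ (u : EReal) < B'}, h u ∂μG =
      ∫⁻ s in {s : ℝ | A < (s : EReal) ∧ (s : EReal) < B}, h (F s) := by
  set I : Set ℝ := {u : ℝ | A' < (u : EReal) ∧ (u : EReal) < B'} with hIdef
  set T : Set ℝ := {s : ℝ | A < (s : EReal) ∧ (s : EReal) < B} with hTdef
  have hmemI : ∀ u : ℝ, u ∈ I ↔ (A' < (u : EReal) ∧ (u : EReal) < B') := fun u => Iff.rfl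
  have hmemT : ∀ s : ℝ, s ∈ T ↔ (A < (s : EReal) ∧ (s : EReal) < B) := fun s => Iff.rfl
  have hImeas : MeasurableSet I := by
    have : I = ((↑) : ℝ → EReal) ⁻¹' (Ioo A' B') := rfl
    rw [this]; exact measurable_coe_real_ereal measurableSet_Ioo
  have hTmeas : MeasurableSet T := by
    have : T = ((↑) : ℝ → EReal) ⁻¹' (Ioo A B) := rfl
    rw [this]; exact measurable_coe_real_ereal measurableSet_Ioo
  have hIsub : ∀ {u v w : ℝ}, u ∈ I → v ∈ I → u ≤ w → w ≤ v → w ∈ I := by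
    intro u v w hu hv h1 h2
    exact ⟨lt_of_lt_of_le hu.1 (EReal.coe_le_coe_iff.2 h1),
      lt_of_le_of_lt (EReal.coe_le_coe_iff.2 h2) hv.2⟩
  have hGA : ∀ u ∈ I, A ≤ (G u : EReal) := fun u hu => hA ▸ sInf_le ⟨u, hu, rfl⟩
  have hGB : ∀ u ∈ I, (G u : EReal) ≤ B := fun u hu => hB ▸ le_sSup ⟨u, hu, rfl⟩
  have hexists_lt : ∀ s : ℝ, A < (s : EReal) → ∃ u, u ∈ I ∧ G u < s := by
    intro s hs
    rw [hA] at hs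
    obtain ⟨x, ⟨u, hu, rfl⟩, hxs⟩ := sInf_lt_iff.1 hs
    exact ⟨u, hu, EReal.coe_lt_coe_iff.1 hxs⟩
  have hexists_gt : ∀ s : ℝ, (s : EReal) < B → ∃ u, u ∈ I ∧ s < G u := by
    intro s hs
    rw [hB] at hs
    obtain ⟨x, ⟨u, hu, rfl⟩, hxs⟩ := lt_sSup_iff.1 hs
    exact ⟨u, hu, EReal.coe_lt_coe_iff.1 hxs⟩
  -- the defining set of `F`
  have hF' : ∀ s ∈ T, F s = sInf {u : ℝ | u ∈ I ∧ s < G u} := fun s hs => hF s hs.1 hs.2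
  have hSne : ∀ s ∈ T, {u : ℝ | u ∈ I ∧ s < G u}.Nonempty := by
    intro s hs
    obtain ⟨u, hu, hgu⟩ := hexists_gt s hs.2
    exact ⟨u, hu, hgu⟩
  have hSlb : ∀ s ∈ T, ∃ u₀, u₀ ∈ I ∧ G u₀ < s ∧
      u₀ ∈ lowerBounds {u : ℝ | u ∈ I ∧ s < G u} := by
    intro s hs
    obtain ⟨u₀, hu₀, hgu₀⟩ := hexists_lt s hs.1
    refine ⟨u₀, hu₀, hgu₀, fun w hw => ?_⟩
    by_contra hcon
    push_neg at hcon
    exact absurd hw.2 (not_lt.2 ((hmono hw.1 hu₀ hcon.le).trans hgu₀.le))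
  have key1 : ∀ s ∈ T, ∀ u ∈ I, s < G u → F s ≤ u := by
    intro s hs u hu hlt
    obtain ⟨u₀, _, _, hlb⟩ := hSlb s hs
    rw [hF' s hs]
    exact csInf_le ⟨u₀, hlb⟩ ⟨hu, hlt⟩
  have key2 : ∀ s ∈ T, ∀ u ∈ I, F s ≤ u → s ≤ G u := by
    intro s hs u hu hFle
    by_contra hgt
    push_neg at hgt
    have hmem : G ⁻¹' (Iio s) ∈ 𝓝[I ∩ Ici u] u := hrc u hu.1 hu.2 (Iio_mem_nhds hgt)
    rw [Metric.mem_nhdsWithin_iff] at hmem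
    obtain ⟨ε, hε, hball⟩ := hmem
    have hlow : ∀ w ∈ {u : ℝ | u ∈ I ∧ s < G u}, u + ε / 2 ≤ w := by
      intro w hw
      by_contra hcon
      push_neg at hcon
      have huw : u ≤ w := by
        by_contra h'
        push_neg at h'
        exact absurd hw.2 (not_lt.2 ((hmono hw.1 hu h'.le).trans hgt.le))
      have hw' : w ∈ Metric.ball u ε ∩ (I ∩ Ici u) := by
        refine ⟨?_, hw.1, huw⟩
        rw [Metric.mem_ball, Real.dist_eq, abs_of_nonneg (sub_nonneg.2 huw)]
        linarith
      exact absurd hw.2 (not_lt.2 (hball hw').le)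
    have hge : u + ε / 2 ≤ F s := by
      rw [hF' s hs]; exact le_csInf (hSne s hs) hlow
    linarith
  have hFmonoT : MonotoneOn F T := by
    intro s hs t ht hst
    rw [hF' s hs, hF' t ht]
    obtain ⟨u₀, _, _, hlb⟩ := hSlb s hs
    exact csInf_le_csInf ⟨u₀, hlb⟩ (hSne t ht) (fun w hw => ⟨hw.1, hst.trans_lt hw.2⟩)
  have hDsubT : ∀ {u v : ℝ}, u ∈ I → v ∈ I → Ioo (G u) (G v) ⊆ T := by
    intro u v hu hv s hs
    exact ⟨lt_of_le_of_lt (hGA u hu) (EReal.coe_lt_coe_iff.2 hs.1),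
      lt_of_lt_of_le (EReal.coe_lt_coe_iff.2 hs.2) (hGB v hv)⟩
  -- the core identity on compact pieces
  have hcore : ∀ a ∈ I, ∀ b ∈ I, a ≤ b →
      ∫⁻ u in Ioc a b, h u ∂μG = ∫⁻ s in Ioo (G a) (G b), h (F s) := by
    intro a ha b hb hab
    have hDT : Ioo (G a) (G b) ⊆ T := hDsubT ha hb
    have hFa : ∀ s ∈ Ioo (G a) (G b), a < F s := by
      intro s hs
      by_contra hcon
      push_neg at hcon
      exact absurd (key2 s (hDT hs) a ha hcon) (not_le.2 hs.1)
    have hFb : ∀ s ∈ Ioo (G a) (G b), F s ≤ b := fun s hs => key1 s (hDT hs) b hb hs.2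
    have hFae : AEMeasurable F (volume.restrict (Ioo (G a) (G b))) :=
      aemeasurable_restrict_of_monotoneOn measurableSet_Ioo (hFmonoT.mono hDT)
    haveI : IsFiniteMeasure (Measure.map F (volume.restrict (Ioo (G a) (G b)))) := by
      constructor
      rw [Measure.map_apply_of_aemeasurable hFae MeasurableSet.univ, preimage_univ,
        Measure.restrict_apply_univ, Real.volume_Ioo]
      exact ofReal_lt_top
    have hmap : Measure.map F (volume.restrict (Ioo (G a) (G b))) = μG.restrict (Ioc a b) := by
      refine Measure.ext_of_Ioc_finite _ _ ?_ ?_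
      · rw [Measure.map_apply_of_aemeasurable hFae MeasurableSet.univ, preimage_univ,
          Measure.restrict_apply_univ, Real.volume_Ioo, Measure.restrict_apply_univ,
          hμG a b ha.1 hab hb.2]
      · intro c d hcd
        rw [Measure.map_apply_of_aemeasurable hFae measurableSet_Ioc,
          Measure.restrict_apply' measurableSet_Ioo, Measure.restrict_apply' measurableSet_Ioc]
        by_cases hd : d < a
        · have h1 : F ⁻¹' Ioc c d ∩ Ioo (G a) (G b) = ∅ := by
            rw [eq_empty_iff_forall_notMem]
            rintro s ⟨hs1, hs2⟩
            exact absurd (hFa s hs2) (not_lt.2 (hs1.2.trans hd.le))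
          have h2 : Ioc c d ∩ Ioc a b = ∅ := by
            rw [eq_empty_iff_forall_notMem]
            rintro x ⟨hx1, hx2⟩
            exact absurd hx2.1 (not_lt.2 (hx1.2.trans hd.le))
          rw [h1, h2, measure_empty, measure_empty]
        push_neg at hd
        by_cases hc : b ≤ c
        · have h1 : F ⁻¹' Ioc c d ∩ Ioo (G a) (G b) = ∅ := by
            rw [eq_empty_iff_forall_notMem]
            rintro s ⟨hs1, hs2⟩
            exact absurd ((hFb s hs2).trans hc) (not_le.2 hs1.1)
          have h2 : Ioc c d ∩ Ioc a b = ∅ := by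
            rw [eq_empty_iff_forall_notMem]
            rintro x ⟨hx1, hx2⟩
            exact absurd (hx2.2.trans hc) (not_le.2 hx1.1)
          rw [h1, h2, measure_empty, measure_empty]
        push_neg at hc
        -- main case : a ≤ d, c < b
        set c' : ℝ := max a c with hc'def
        set d' : ℝ := min b d with hd'def
        have hc'I : c' ∈ I := hIsub ha hb (le_max_left _ _) (max_le hab hc.le)
        have hd'I : d' ∈ I := hIsub ha hb (le_min hab hd) (min_le_left _ _)
        have hc'd' : c' ≤ d' := max_le (le_min hab hd) (le_min hc.le hcd.le)
        have hGc' : G a ≤ G c' := hmono ha hc'I (le_max_left _ _)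
        have hGd' : G d' ≤ G b := hmono hd'I hb (min_le_left _ _)
        have hGc'd' : G c' ≤ G d' := hmono hc'I hd'I hc'd'
        -- a.e. identification of the preimage
        have hIff : ∀ s ∈ Ioo (G a) (G b), s ≠ G c' → s ≠ G d' →
            (s ∈ F ⁻¹' Ioc c d ↔ s ∈ Ioc (G c') (G d')) := by
          intro s hs hne1 hne2
          constructor
          · rintro ⟨h1, h2⟩
            have hFd' : F s ≤ d' := le_min (hFb s hs) h2
            have hsd' : s ≤ G d' := key2 s (hDT hs) d' hd'I hFd'
            have hc'F : c' < F s := max_lt (hFa s hs) h1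
            have hsc' : G c' ≤ s := by
              by_contra hcon
              push_neg at hcon
              exact absurd (key1 s (hDT hs) c' hc'I hcon) (not_le.2 hc'F)
            exact ⟨lt_of_le_of_ne hsc' (Ne.symm hne1), hsd'⟩
          · rintro ⟨h1, h2⟩
            have hsd' : s < G d' := lt_of_le_of_ne h2 hne2
            have hFd : F s ≤ d' := key1 s (hDT hs) d' hd'I hsd'
            have hc'F : c' < F s := by
              by_contra hcon
              push_neg at hcon
              exact absurd (key2 s (hDT hs) c' hc'I hcon) (not_le.2 h1)
            exact ⟨lt_of_le_of_lt (le_max_right a c) hc'F, hFd.trans (min_le_right _ _)⟩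
        have haeeq : (F ⁻¹' Ioc c d ∩ Ioo (G a) (G b) : Set ℝ) =ᵐ[volume]
            (Ioc (G c') (G d') ∩ Ioo (G a) (G b) : Set ℝ) := by
          rw [ae_eq_set]
          constructor
          · refine measure_mono_null (fun s hs => ?_)
              (Set.Finite.measure_zero ((Set.finite_singleton (G d')).insert (G c')) _)
            by_contra hcon
            simp only [mem_insert_iff, mem_singleton_iff, not_or] at hcon
            exact hs.2 ⟨(hIff s hs.1.2 hcon.1 hcon.2).1 hs.1.1, hs.1.2⟩
          · refine measure_mono_null (fun s hs => ?_)
              (Set.Finite.measure_zero ((Set.finite_singleton (G d')).insert (G c')) _)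
            by_contra hcon
            simp only [mem_insert_iff, mem_singleton_iff, not_or] at hcon
            exact hs.2 ⟨(hIff s hs.1.2 hcon.1 hcon.2).2 hs.1.1, hs.1.2⟩
        rw [measure_congr haeeq]
        have hvol : volume (Ioc (G c') (G d') ∩ Ioo (G a) (G b) : Set ℝ)
            = ENNReal.ofReal (G d' - G c') := by
          refine le_antisymm ?_ ?_
          · calc volume (Ioc (G c') (G d') ∩ Ioo (G a) (G b) : Set ℝ)
                ≤ volume (Ioc (G c') (G d')) := measure_mono inter_subset_left
              _ = ENNReal.ofReal (G d' - G c') := Real.volume_Ioc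
          · calc ENNReal.ofReal (G d' - G c') = volume (Ioo (G c') (G d')) :=
                Real.volume_Ioo.symm
              _ ≤ volume (Ioc (G c') (G d') ∩ Ioo (G a) (G b) : Set ℝ) := by
                refine measure_mono (fun x hx => ⟨⟨hx.1, hx.2.le⟩,
                  lt_of_le_of_lt hGc' hx.1, lt_of_lt_of_le hx.2 hGd'⟩)
        rw [hvol]
        have h2 : Ioc c d ∩ Ioc a b = Ioc c' d' := by
          rw [Ioc_inter_Ioc, max_comm c a, min_comm d b]
        rw [h2, hμG c' d' hc'I.1 hc'd' hd'I.2]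
    calc ∫⁻ u in Ioc a b, h u ∂μG
        = ∫⁻ u, h u ∂(Measure.map F (volume.restrict (Ioo (G a) (G b)))) := by rw [hmap]
      _ = ∫⁻ s in Ioo (G a) (G b), h (F s) := lintegral_map' hh.aemeasurable hFae
  -- build exhausting sequences
  obtain ⟨u₀, v₀, hu₀, hv₀, hGuv⟩ := hnc
  obtain ⟨p, q, hp, hq, hpq⟩ : ∃ p q : ℝ, p ∈ I ∧ q ∈ I ∧ p < q := by
    rcases lt_trichotomy u₀ v₀ with hlt | heq | hgt
    · exact ⟨u₀, v₀, hu₀, hv₀, hlt⟩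
    · exact absurd (heq ▸ rfl) hGuv
    · exact ⟨v₀, u₀, hv₀, hu₀, hgt⟩
  obtain ⟨cseq, hc_anti, hc_mem, hc_tendsto⟩ := exists_seq_strictAnti_tendsto' hp.1
  obtain ⟨dseq, hd_mono, hd_mem, hd_tendsto⟩ := exists_seq_strictMono_tendsto' hq.2
  have hc_ne : ∀ n, cseq n ≠ ⊥ ∧ cseq n ≠ ⊤ := by
    intro n
    exact ⟨(bot_le.trans_lt (hc_mem n).1).ne', ((hc_mem n).2.trans_le le_top).ne⟩
  have hd_ne : ∀ n, dseq n ≠ ⊥ ∧ dseq n ≠ ⊤ := by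
    intro n
    exact ⟨(bot_le.trans_lt (hd_mem n).1).ne', ((hd_mem n).2.trans_le le_top).ne⟩
  set aseq : ℕ → ℝ := fun n => (cseq n).toReal with haseq
  set bseq : ℕ → ℝ := fun n => (dseq n).toReal with hbseq
  have hacoe : ∀ n, (aseq n : EReal) = cseq n := fun n =>
    EReal.coe_toReal (hc_ne n).2 (hc_ne n).1
  have hbcoe : ∀ n, (bseq n : EReal) = dseq n := fun n =>
    EReal.coe_toReal (hd_ne n).2 (hd_ne n).1
  have haI : ∀ n, aseq n ∈ I := by
    intro n
    refine ⟨?_, ?_⟩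
    · rw [hacoe n]; exact (hc_mem n).1
    · rw [hacoe n]; exact (hc_mem n).2.trans hp.2
  have hbI : ∀ n, bseq n ∈ I := by
    intro n
    refine ⟨?_, ?_⟩
    · rw [hbcoe n]; exact hq.1.trans (hd_mem n).1
    · rw [hbcoe n]; exact (hd_mem n).2
  have hap : ∀ n, aseq n < p := fun n =>
    EReal.coe_lt_coe_iff.1 (by rw [hacoe n]; exact (hc_mem n).2)
  have hqb : ∀ n, q < bseq n := fun n =>
    EReal.coe_lt_coe_iff.1 (by rw [hbcoe n]; exact (hd_mem n).1)
  have hab : ∀ n, aseq n ≤ bseq n := fun n => ((hap n).trans (hpq.trans (hqb n))).le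
  have ha_anti : Antitone aseq := by
    intro m n hmn
    exact EReal.coe_le_coe_iff.1 (by rw [hacoe n, hacoe m]; exact hc_anti.antitone hmn)
  have hb_mono : Monotone bseq := by
    intro m n hmn
    exact EReal.coe_le_coe_iff.1 (by rw [hbcoe n, hbcoe m]; exact hd_mono.monotone hmn)
  -- the unions
  have hIunion : (⋃ n, Ioc (aseq n) (bseq n)) = I := by
    apply Set.eq_of_subset_of_subset
    · refine iUnion_subset fun n => fun u hu => hIsub (haI n) (hbI n) hu.1.le hu.2
    · intro u hu
      have h1 : ∀ᶠ n in Filter.atTop, cseq n < (u : EReal) :=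
        hc_tendsto.eventually_lt_const hu.1
      have h2 : ∀ᶠ n in Filter.atTop, (u : EReal) < dseq n :=
        hd_tendsto.eventually_const_lt hu.2
      obtain ⟨n, hn1, hn2⟩ := (h1.and h2).exists
      refine mem_iUnion.2 ⟨n, ?_, ?_⟩
      · exact EReal.coe_lt_coe_iff.1 (by rw [hacoe n]; exact hn1)
      · exact (EReal.coe_lt_coe_iff.1 (by rw [hbcoe n]; exact hn2)).le
  have hTunion : (⋃ n, Ioo (G (aseq n)) (G (bseq n))) = T := by
    apply Set.eq_of_subset_of_subset
    · exact iUnion_subset fun n => hDsubT (haI n) (hbI n)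
    · intro s hs
      obtain ⟨u, huI, hGu⟩ := hexists_lt s hs.1
      obtain ⟨v, hvI, hGv⟩ := hexists_gt s hs.2
      have h1 : ∀ᶠ n in Filter.atTop, cseq n < (u : EReal) :=
        hc_tendsto.eventually_lt_const huI.1
      have h2 : ∀ᶠ n in Filter.atTop, (v : EReal) < dseq n :=
        hd_tendsto.eventually_const_lt hvI.2
      obtain ⟨n, hn1, hn2⟩ := (h1.and h2).exists
      have hau : aseq n ≤ u := (EReal.coe_lt_coe_iff.1 (by rw [hacoe n]; exact hn1)).le
      have hvb : v ≤ bseq n := (EReal.coe_lt_coe_iff.1 (by rw [hbcoe n]; exact hn2)).le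
      refine mem_iUnion.2 ⟨n, ?_, ?_⟩
      · exact lt_of_le_of_lt (hmono (haI n) huI hau) hGu
      · exact lt_of_lt_of_le hGv (hmono hvI (hbI n) hvb)
  have hIocmono : Monotone fun n => Ioc (aseq n) (bseq n) :=
    fun m n hmn => Ioc_subset_Ioc (ha_anti hmn) (hb_mono hmn)
  have hIoomono : Monotone fun n => Ioo (G (aseq n)) (G (bseq n)) :=
    fun m n hmn => Ioo_subset_Ioo (hmono (haI n) (haI m) (ha_anti hmn))
      (hmono (hbI m) (hbI n) (hb_mono hmn))
  -- a measurable a.e. representative of h ∘ F on T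
  have hHFae : AEMeasurable (fun s => h (F s)) (volume.restrict T) :=
    hh.comp_aemeasurable (aemeasurable_restrict_of_monotoneOn hTmeas hFmonoT)
  set g : ℝ → ℝ≥0∞ := hHFae.mk _ with hgdef
  have hgmeas : Measurable g := hHFae.measurable_mk
  have hgae : (fun s => h (F s)) =ᵐ[volume.restrict T] g := hHFae.ae_eq_mk
  have hgae' : ∀ n, (fun s => h (F s)) =ᵐ[volume.restrict (Ioo (G (aseq n)) (G (bseq n)))] g :=
    fun n => ae_restrict_of_ae_restrict_of_subset (hDsubT (haI n) (hbI n)) hgae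
  calc ∫⁻ u in I, h u ∂μG
      = ∫⁻ u in ⋃ n, Ioc (aseq n) (bseq n), h u ∂μG := by rw [hIunion]
    _ = ⨆ n, ∫⁻ u in Ioc (aseq n) (bseq n), h u ∂μG :=
        aux_sup μG hh (fun n => measurableSet_Ioc) hIocmono
    _ = ⨆ n, ∫⁻ s in Ioo (G (aseq n)) (G (bseq n)), h (F s) := by
        refine iSup_congr fun n => ?_
        exact hcore (aseq n) (haI n) (bseq n) (hbI n) (hab n)
    _ = ⨆ n, ∫⁻ s in Ioo (G (aseq n)) (G (bseq n)), g s := by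
        exact iSup_congr fun n => lintegral_congr_ae (hgae' n)
    _ = ∫⁻ s in ⋃ n, Ioo (G (aseq n)) (G (bseq n)), g s :=
        (aux_sup volume hgmeas (fun n => measurableSet_Ioo) hIoomono).symm
    _ = ∫⁻ s in T, g s := by rw [hTunion]
    _ = ∫⁻ s in T, h (F s) := (lintegral_congr_ae hgae).symm
end

section
/- Let f be decreasing, left-continuous, not constant on an interval (a,b), and satisfy inf_t f(t) < f(s) < sup_t f(t) for all s ∈ (a,b). Then the τ-measure τ of f (pushforward of Lebesgue measure on (a,b) by f) satisfies: with a' = inf Supp(τ) and b' = sup Supp(τ), one has a' < b', τ((p,q)) < ∞ for all a' < p < q < b', τ({a'}) = 0 if a' > -∞, and τ({b'}) = 0 if b' < ∞. -/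
open MeasureTheory Set ENNReal

/-- If `f` satisfies Condition (A) on `(a,b)` (decreasing, left-continuous,
non-constant, strictly between its infimum and supremum), then its `τ`-measure
satisfies Condition (B). -/
theorem stmt_13 (a b : EReal) (hab : a < b) (f : ℝ → ℝ) (hmeas : Measurable f)
    (hanti : AntitoneOn f {s : ℝ | a < (s : EReal) ∧ (s : EReal) < b})
    (hlc : ∀ s : ℝ, a < (s : EReal) → (s : EReal) < b →
      ContinuousWithinAt f ({s : ℝ | a < (s : EReal) ∧ (s : EReal) < b} ∩ Iic s) s)
    (hnc : ∃ s t : ℝ, (a < (s : EReal) ∧ (s : EReal) < b) ∧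
      (a < (t : EReal) ∧ (t : EReal) < b) ∧ f s ≠ f t)
    (hstrict : ∀ s : ℝ, a < (s : EReal) → (s : EReal) < b →
      sInf {x : EReal | ∃ t : ℝ, (a < (t : EReal) ∧ (t : EReal) < b) ∧ x = (f t : EReal)}
        < (f s : EReal) ∧
      (f s : EReal) <
        sSup {x : EReal | ∃ t : ℝ, (a < (t : EReal) ∧ (t : EReal) < b) ∧ x = (f t : EReal)})
    (τ : Measure ℝ)
    (hτ : ∀ B : Set ℝ, MeasurableSet B →
      τ B = volume {s : ℝ | (a < (s : EReal) ∧ (s : EReal) < b) ∧ f s ∈ B})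
    (a' b' : EReal)
    (ha' : a' = sInf {x : EReal | ∃ u : ℝ,
      (∀ U : Set ℝ, IsOpen U → u ∈ U → τ U ≠ 0) ∧ x = (u : EReal)})
    (hb' : b' = sSup {x : EReal | ∃ u : ℝ,
      (∀ U : Set ℝ, IsOpen U → u ∈ U → τ U ≠ 0) ∧ x = (u : EReal)}) :
    a' < b' ∧
      (∀ p q : ℝ, a' < (p : EReal) → p < q → (q : EReal) < b' → τ (Ioo p q) < ⊤) ∧
      (∀ u : ℝ, a' = (u : EReal) → τ {u} = 0) ∧
      (∀ u : ℝ, b' = (u : EReal) → τ {u} = 0) := by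
  -- nonemptiness from τ B ≠ 0
  have hne : ∀ B : Set ℝ, MeasurableSet B → τ B ≠ 0 →
      ∃ s : ℝ, (a < (s : EReal) ∧ (s : EReal) < b) ∧ f s ∈ B := by
    intro B hB h
    rw [hτ B hB] at h
    by_contra hc
    push_neg at hc
    apply h
    have : {s : ℝ | (a < (s : EReal) ∧ (s : EReal) < b) ∧ f s ∈ B} = ∅ := by
      ext s; simp only [mem_setOf_eq, mem_empty_iff_false, iff_false]
      rintro ⟨h1, h2⟩; exact hc s h1 h2
    rw [this]; exact measure_empty
  -- every value of f on (a,b) is a support point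
  have hsupp : ∀ m : ℝ, a < (m : EReal) → (m : EReal) < b →
      ∀ U : Set ℝ, IsOpen U → f m ∈ U → τ U ≠ 0 := by
    intro m ham hmb U hU hfm
    have hcw := hlc m ham hmb
    have hU' : U ∈ nhds (f m) := hU.mem_nhds hfm
    have hpre := hcw hU'
    rw [Filter.mem_map, mem_nhdsWithin] at hpre
    obtain ⟨V, hVopen, hmV, hVsub⟩ := hpre
    obtain ⟨δ, hδ, hball⟩ := Metric.isOpen_iff.1 hVopen m hmV
    obtain ⟨c, hac, hcm⟩ := EReal.exists_between_coe_real ham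
    have hcm' : c < m := by exact_mod_cast hcm
    set ε := min (δ / 2) (m - c) with hε
    have hεpos : 0 < ε := lt_min (by linarith) (by linarith)
    have hεδ : ε < δ := lt_of_le_of_lt (min_le_left _ _) (by linarith)
    have hsub : Ioc (m - ε) m ⊆
        {s : ℝ | (a < (s : EReal) ∧ (s : EReal) < b) ∧ f s ∈ U} := by
      intro r ⟨hr1, hr2⟩
      have hcr : c < r := by
        have : m - ε ≥ c := by
          have := min_le_right (δ / 2) (m - c); simp only [← hε] at this; linarith
        linarith
      have har : a < (r : EReal) := lt_trans hac (by exact_mod_cast hcr)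
      have hrb : (r : EReal) < b := lt_of_le_of_lt (by exact_mod_cast hr2) hmb
      refine ⟨⟨har, hrb⟩, ?_⟩
      apply hVsub
      refine ⟨hball ?_, ⟨har, hrb⟩, hr2⟩
      rw [Metric.mem_ball, Real.dist_eq, abs_lt]
      constructor <;> linarith
    intro h0
    rw [hτ U hU.measurableSet] at h0
    have hmono := measure_mono (μ := volume) hsub
    rw [h0, nonpos_iff_eq_zero, Real.volume_Ioc] at hmono
    rw [ENNReal.ofReal_eq_zero] at hmono
    linarith
  set S := {x : EReal | ∃ u : ℝ,
      (∀ U : Set ℝ, IsOpen U → u ∈ U → τ U ≠ 0) ∧ x = (u : EReal)} with hS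
  have hmemS : ∀ m : ℝ, a < (m : EReal) → (m : EReal) < b → (f m : EReal) ∈ S :=
    fun m h1 h2 => ⟨f m, hsupp m h1 h2, rfl⟩
  -- part 1
  obtain ⟨s, t, hs, ht, hst⟩ := hnc
  have key1 : a' < b' := by
    have hsS := hmemS s hs.1 hs.2
    have htS := hmemS t ht.1 ht.2
    rcases lt_or_gt_of_ne hst with h | h
    · calc a' ≤ (f s : EReal) := ha' ▸ sInf_le hsS
        _ < (f t : EReal) := by exact_mod_cast h
        _ ≤ b' := hb' ▸ le_sSup htS
    · calc a' ≤ (f t : EReal) := ha' ▸ sInf_le htS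
        _ < (f s : EReal) := by exact_mod_cast h
        _ ≤ b' := hb' ▸ le_sSup hsS
  -- part 2
  have key2 : ∀ p q : ℝ, a' < (p : EReal) → p < q → (q : EReal) < b' →
      τ (Ioo p q) < ⊤ := by
    intro p q hp hpq hq
    rw [ha'] at hp; rw [hb'] at hq
    obtain ⟨x, ⟨u, hu, rfl⟩, hxp⟩ := sInf_lt_iff.1 hp
    obtain ⟨y, ⟨v, hv, rfl⟩, hqy⟩ := lt_sSup_iff.1 hq
    have hup : u < p := by exact_mod_cast hxp
    have hqv : q < v := by exact_mod_cast hqy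
    obtain ⟨t1, ht1, hft1⟩ := hne (Iio p) measurableSet_Iio (hu (Iio p) isOpen_Iio hup)
    obtain ⟨s1, hs1, hfs1⟩ := hne (Ioi q) measurableSet_Ioi (hv (Ioi q) isOpen_Ioi hqv)
    rw [hτ _ measurableSet_Ioo]
    have hsub : {r : ℝ | (a < (r : EReal) ∧ (r : EReal) < b) ∧ f r ∈ Ioo p q} ⊆
        Ioo s1 t1 := by
      rintro r ⟨hr, hfr⟩
      constructor
      · by_contra h
        push_neg at h
        have := hanti hr hs1 h
        exact absurd (lt_of_lt_of_le hfs1 this) (not_lt.2 (le_of_lt hfr.2))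
      · by_contra h
        push_neg at h
        have := hanti ht1 hr h
        exact absurd (lt_of_le_of_lt this hft1) (not_lt.2 (le_of_lt hfr.1))
    exact lt_of_le_of_lt (measure_mono hsub)
      (by rw [Real.volume_Ioo]; exact ofReal_lt_top)
  -- part 3
  have key3 : ∀ u : ℝ, a' = (u : EReal) → τ {u} = 0 := by
    intro u hu
    by_contra h0
    obtain ⟨m, hm, hfm⟩ := hne {u} (measurableSet_singleton u) h0
    have hfmu : f m = u := hfm
    obtain ⟨x, ⟨t1, ht1, rfl⟩, hx⟩ := sInf_lt_iff.1 (hstrict m hm.1 hm.2).1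
    have hle : a' ≤ (f t1 : EReal) := ha' ▸ sInf_le (hmemS t1 ht1.1 ht1.2)
    rw [hu] at hle
    rw [hfmu] at hx
    exact absurd (lt_of_le_of_lt hle hx) (lt_irrefl _)
  -- part 4
  have key4 : ∀ u : ℝ, b' = (u : EReal) → τ {u} = 0 := by
    intro u hu
    by_contra h0
    obtain ⟨m, hm, hfm⟩ := hne {u} (measurableSet_singleton u) h0
    have hfmu : f m = u := hfm
    obtain ⟨x, ⟨t1, ht1, rfl⟩, hx⟩ := lt_sSup_iff.1 (hstrict m hm.1 hm.2).2
    have hle : (f t1 : EReal) ≤ b' := hb' ▸ le_sSup (hmemS t1 ht1.1 ht1.2)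
    rw [hu] at hle
    rw [hfmu] at hx
    exact absurd (lt_of_lt_of_le hx hle) (lt_irrefl _)
  exact ⟨key1, key2, key3, key4⟩
end

section
/- Let τ be a nonzero measure on ℝ such that, with a' = inf Supp(τ), b' = sup Supp(τ): a' < b', τ((p,q)) < ∞ whenever a' < p < q < b', τ({a'}) = 0 if a' > -∞, and τ({b'}) = 0 if b' < ∞. Then there exist an interval (a,b) with -∞ ≤ a < b ≤ ∞ and a decreasing, left-continuous, non-constant function f on (a,b) with inf f < f(s) < sup f for all s, such that τ is the pushforward of Lebesgue measure on (a,b) under f. -/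
open MeasureTheory Set ENNReal Filter Topology

noncomputable section Stmt14Aux

/-- The open interval `(a',b')` in `ℝ`, with `EReal` endpoints. -/
def s14I (a' b' : EReal) : Set ℝ := {x : ℝ | a' < (x : EReal) ∧ (x : EReal) < b'}

/-- The (decreasing, right-continuous on `(a',b')`) anchored CDF-like function. -/
def s14G (τ : Measure ℝ) (c : ℝ) : ℝ → ℝ :=
  fun x => (τ (Ioc x c)).toReal - (τ (Ioc c x)).toReal

def s14E (τ : Measure ℝ) (a' b' : EReal) (c : ℝ) (s : ℝ) : Set ℝ :=
  {x | x ∈ s14I a' b' ∧ s ≤ s14G τ c x}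

def s14f (τ : Measure ℝ) (a' b' : EReal) (c : ℝ) : ℝ → ℝ :=
  fun s => sSup (s14E τ a' b' c s)

def s14a (τ : Measure ℝ) (a' b' : EReal) (c : ℝ) : EReal :=
  sInf ((fun t => ((s14G τ c t : ℝ) : EReal)) '' s14I a' b')

def s14b (τ : Measure ℝ) (a' b' : EReal) (c : ℝ) : EReal :=
  sSup ((fun t => ((s14G τ c t : ℝ) : EReal)) '' s14I a' b')

variable {τ : Measure ℝ} {a' b' : EReal} {c : ℝ}

lemma s14fin (h2 : ∀ p q : ℝ, a' < (p : EReal) → p < q → (q : EReal) < b' → τ (Ioo p q) < ⊤)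
    {x y : ℝ} (hx : x ∈ s14I a' b') (hy : y ∈ s14I a' b') : τ (Ioc x y) ≠ ⊤ := by
  rcases le_or_gt y x with h | h
  · rw [Ioc_eq_empty (not_lt.2 h)]; simp
  · obtain ⟨p, hp1, hp2⟩ := EReal.exists_between_coe_real hx.1
    obtain ⟨q, hq1, hq2⟩ := EReal.exists_between_coe_real hy.2
    have hsub : Ioc x y ⊆ Ioo p q := fun t ht =>
      ⟨lt_of_lt_of_le (lt_trans (EReal.coe_lt_coe_iff.1 hp2) ht.1) le_rfl,
        lt_of_le_of_lt ht.2 (EReal.coe_lt_coe_iff.1 hq1)⟩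
    exact fun htop => absurd (h2 p q hp1
      (lt_trans (lt_of_lt_of_le (EReal.coe_lt_coe_iff.1 hp2) (le_of_lt h))
        (EReal.coe_lt_coe_iff.1 hq1)) hq2)
      (by rw [lt_top_iff_ne_top, ne_eq, not_not]
          exact top_le_iff.1 (htop ▸ measure_mono hsub))

lemma s14add (h2 : ∀ p q : ℝ, a' < (p : EReal) → p < q → (q : EReal) < b' → τ (Ioo p q) < ⊤)
    {x y z : ℝ} (hx : x ∈ s14I a' b') (hy : y ∈ s14I a' b') (hz : z ∈ s14I a' b')
    (h1 : x ≤ y) (h2' : y ≤ z) :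
    (τ (Ioc x z)).toReal = (τ (Ioc x y)).toReal + (τ (Ioc y z)).toReal := by
  have hdisj : Disjoint (Ioc x y) (Ioc y z) := by
    rw [Set.disjoint_left]; rintro t ⟨_, ht1⟩ ⟨ht2, _⟩; exact absurd ht2 (not_lt.2 ht1)
  rw [← Ioc_union_Ioc_eq_Ioc h1 h2', measure_union hdisj measurableSet_Ioc,
    ENNReal.toReal_add (s14fin h2 hx hy) (s14fin h2 hy hz)]

lemma s14Gdiff (h2 : ∀ p q : ℝ, a' < (p : EReal) → p < q → (q : EReal) < b' → τ (Ioo p q) < ⊤)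
    (hc : c ∈ s14I a' b') {x y : ℝ} (hx : x ∈ s14I a' b') (hy : y ∈ s14I a' b') (hxy : x ≤ y) :
    s14G τ c x - s14G τ c y = (τ (Ioc x y)).toReal := by
  unfold s14G
  rcases le_total y c with hyc | hyc
  · have hxc : x ≤ c := le_trans hxy hyc
    rw [Ioc_eq_empty (not_lt.2 hxc), Ioc_eq_empty (not_lt.2 hyc),
      s14add h2 hx hy hc hxy hyc]
    simp
  · rcases le_total x c with hxc | hxc
    · rw [Ioc_eq_empty (not_lt.2 hxc), Ioc_eq_empty (not_lt.2 hyc),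
        s14add h2 hx hc hy hxc hyc]
      simp
    · have hyc' : c ≤ y := le_trans hxc hxy
      rw [Ioc_eq_empty (not_lt.2 hxc), Ioc_eq_empty (not_lt.2 hyc'),
        s14add h2 hc hx hy hxc hxy]
      simp

lemma s14G_anti (h2 : ∀ p q : ℝ, a' < (p : EReal) → p < q → (q : EReal) < b' → τ (Ioo p q) < ⊤)
    (hc : c ∈ s14I a' b') {x y : ℝ} (hx : x ∈ s14I a' b') (hy : y ∈ s14I a' b') (hxy : x ≤ y) :
    s14G τ c y ≤ s14G τ c x := by
  have := s14Gdiff h2 hc hx hy hxy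
  have h0 : (0:ℝ) ≤ (τ (Ioc x y)).toReal := ENNReal.toReal_nonneg
  linarith

/-- An open set disjoint from the support of `τ` is null. -/
lemma s14open_null {U : Set ℝ} (hU : IsOpen U)
    (h : ∀ u ∈ U, ¬ (∀ V : Set ℝ, IsOpen V → u ∈ V → τ V ≠ 0)) : τ U = 0 := by
  have h' : ∀ u ∈ U, ∃ V : Set ℝ, IsOpen V ∧ u ∈ V ∧ τ V = 0 := by
    intro u hu
    have := h u hu
    push_neg at this
    obtain ⟨V, h1, h2, h3⟩ := this
    exact ⟨V, h1, h2, h3⟩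
  obtain ⟨T, hTc, hTsub, hTU⟩ := TopologicalSpace.isOpen_sUnion_countable
    {V : Set ℝ | IsOpen V ∧ τ V = 0} (fun V hV => hV.1)
  have hUsub : U ⊆ ⋃₀ T := by
    rw [hTU]
    intro u hu
    obtain ⟨V, h1, hm, h3⟩ := h' u hu
    exact ⟨V, ⟨h1, h3⟩, hm⟩
  have h0 : τ (⋃₀ T) = 0 := (measure_sUnion_null_iff hTc).2 fun V hV => (hTsub hV).2
  exact le_antisymm (h0 ▸ measure_mono hUsub) zero_le

lemma s14left_null
    (hlb : ∀ u : ℝ, (∀ U : Set ℝ, IsOpen U → u ∈ U → τ U ≠ 0) → a' ≤ (u : EReal))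
    (h3 : ∀ u : ℝ, a' = (u : EReal) → τ {u} = 0)
    (htri : a' = ⊥ ∨ ∃ u : ℝ, a' = (u : EReal)) :
    τ {s : ℝ | (s : EReal) ≤ a'} = 0 := by
  rcases htri with h | ⟨u, rfl⟩
  · have : {s : ℝ | (s : EReal) ≤ a'} = ∅ := by
      ext s
      simp only [mem_setOf_eq, mem_empty_iff_false, iff_false, h, le_bot_iff]
      exact EReal.coe_ne_bot s
    rw [this]; exact measure_empty
  · have hIio : τ (Iio u) = 0 := by
      refine s14open_null isOpen_Iio (fun v hv hS => ?_)
      exact absurd (EReal.coe_le_coe_iff.1 (hlb v hS)) (not_le.2 hv)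
    have hu : τ {u} = 0 := h3 u rfl
    have hset : {s : ℝ | (s : EReal) ≤ (u : EReal)} = Iio u ∪ {u} := by
      ext s
      simp only [mem_setOf_eq, EReal.coe_le_coe_iff, mem_union, mem_Iio, mem_singleton_iff]
      exact le_iff_lt_or_eq
    rw [hset]
    exact le_antisymm ((measure_union_le _ _).trans (by simp [hIio, hu])) zero_le

lemma s14right_null
    (hub : ∀ u : ℝ, (∀ U : Set ℝ, IsOpen U → u ∈ U → τ U ≠ 0) → (u : EReal) ≤ b')
    (h4 : ∀ u : ℝ, b' = (u : EReal) → τ {u} = 0)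
    (htri : b' = ⊤ ∨ ∃ u : ℝ, b' = (u : EReal)) :
    τ {s : ℝ | b' ≤ (s : EReal)} = 0 := by
  rcases htri with h | ⟨u, rfl⟩
  · have : {s : ℝ | b' ≤ (s : EReal)} = ∅ := by
      ext s
      simp only [mem_setOf_eq, mem_empty_iff_false, iff_false, h, top_le_iff]
      exact fun hh => EReal.coe_ne_top s hh
    rw [this]; exact measure_empty
  · have hIoi : τ (Ioi u) = 0 := by
      refine s14open_null isOpen_Ioi (fun v hv hS => ?_)
      exact absurd (EReal.coe_le_coe_iff.1 (hub v hS)) (not_le.2 hv)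
    have hu : τ {u} = 0 := h4 u rfl
    have hset : {s : ℝ | (u : EReal) ≤ (s : EReal)} = Ioi u ∪ {u} := by
      ext s
      simp only [mem_setOf_eq, EReal.coe_le_coe_iff, mem_union, mem_Ioi, mem_singleton_iff]
      constructor
      · intro h; rcases lt_or_eq_of_le h with h | h
        · exact Or.inl h
        · exact Or.inr h.symm
      · rintro (h | rfl); exacts [le_of_lt h, le_rfl]
    rw [hset]
    exact le_antisymm ((measure_union_le _ _).trans (by simp [hIoi, hu])) zero_le

lemma s14compl_null (hl : τ {s : ℝ | (s : EReal) ≤ a'} = 0)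
    (hr : τ {s : ℝ | b' ≤ (s : EReal)} = 0) : τ (s14I a' b')ᶜ = 0 := by
  have hsub : (s14I a' b')ᶜ ⊆ {s : ℝ | (s : EReal) ≤ a'} ∪ {s : ℝ | b' ≤ (s : EReal)} := by
    intro t ht
    simp only [s14I, mem_compl_iff, mem_setOf_eq, not_and_or, not_lt] at ht
    rcases ht with h | h
    · exact Or.inl h
    · exact Or.inr h
  exact le_antisymm ((measure_mono hsub).trans ((measure_union_le _ _).trans (by simp [hl, hr])))
    zero_le

lemma s14exists_right
    (hdense : ∀ x : ℝ, (x : EReal) < b' →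
      ∃ u : ℝ, (∀ U : Set ℝ, IsOpen U → u ∈ U → τ U ≠ 0) ∧ x < u)
    (hub : ∀ u : ℝ, (∀ U : Set ℝ, IsOpen U → u ∈ U → τ U ≠ 0) → (u : EReal) ≤ b')
    (hB3 : τ {s : ℝ | b' ≤ (s : EReal)} = 0)
    {x : ℝ} (hx : x ∈ s14I a' b') :
    ∃ y, y ∈ s14I a' b' ∧ x < y ∧ τ (Ioc x y) ≠ 0 := by
  obtain ⟨u, hu, hxu⟩ := hdense x hx.2
  rcases lt_or_ge (u : EReal) b' with hub' | hub'
  · obtain ⟨y, h5, h6⟩ := EReal.exists_between_coe_real hub'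
    have huy : u < y := EReal.coe_lt_coe_iff.1 h5
    refine ⟨y, ⟨lt_trans hx.1 (EReal.coe_lt_coe_iff.2 (lt_trans hxu huy)), h6⟩,
      lt_trans hxu huy, ?_⟩
    have hne : τ (Ioo x y) ≠ 0 := hu (Ioo x y) isOpen_Ioo ⟨hxu, huy⟩
    intro h0
    exact hne (le_antisymm (h0 ▸ measure_mono Ioo_subset_Ioc_self) zero_le)
  · have hb'u : b' = (u : EReal) := le_antisymm hub' (hub u hu)
    have h7 : τ (Ioo x (u + 1)) ≠ 0 := hu _ isOpen_Ioo ⟨hxu, by linarith⟩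
    have hsplit : Ioo x (u + 1) ⊆ Ioo x u ∪ {s : ℝ | b' ≤ (s : EReal)} := by
      intro t ht
      rcases lt_or_ge t u with h | h
      · exact Or.inl ⟨ht.1, h⟩
      · exact Or.inr (by simp only [mem_setOf_eq, hb'u]; exact EReal.coe_le_coe_iff.2 h)
    have h8 : τ (Ioo x u) ≠ 0 := by
      intro h0
      exact h7 (le_antisymm ((measure_mono hsplit).trans ((measure_union_le _ _).trans
        (by simp [h0, hB3]))) zero_le)
    have hcover : Ioo x u ⊆ ⋃ k : ℕ, Ioc x (u - (u - x) / (k + 1)) := by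
      intro t ht
      obtain ⟨k, hk⟩ := exists_nat_gt ((u - x) / (u - t))
      have htu : (0:ℝ) < u - t := by linarith [ht.2]
      have hk1 : (u - x) / (u - t) < (k : ℝ) + 1 := lt_trans hk (by linarith)
      have : u - x < (u - t) * ((k : ℝ) + 1) := by
        have := (div_lt_iff₀ htu).1 hk1
        linarith [this]
      have hdiv : (u - x) / ((k : ℝ) + 1) < u - t := by
        rw [div_lt_iff₀ (by positivity)]
        linarith [this]
      exact mem_iUnion.2 ⟨k, ⟨ht.1, by linarith [hdiv]⟩⟩
    have hex : ∃ k : ℕ, τ (Ioc x (u - (u - x) / (k + 1))) ≠ 0 := by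
      by_contra hall
      push_neg at hall
      exact h8 (le_antisymm ((measure_mono hcover).trans
        (le_of_eq (measure_iUnion_null hall))) zero_le)
    obtain ⟨k, hk⟩ := hex
    set y := u - (u - x) / ((k : ℝ) + 1) with hy
    have hxy : x < y := by
      by_contra h
      exact hk (by rw [Ioc_eq_empty (by simpa using h)]; simp)
    have hyu : y < u := by
      have : (0:ℝ) < (u - x) / ((k : ℝ) + 1) := div_pos (by linarith) (by positivity)
      simp only [hy]; linarith
    exact ⟨y, ⟨lt_trans hx.1 (EReal.coe_lt_coe_iff.2 hxy),
      hb'u ▸ EReal.coe_lt_coe_iff.2 hyu⟩, hxy, hk⟩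

lemma s14exists_left
    (hdense : ∀ x : ℝ, a' < (x : EReal) →
      ∃ u : ℝ, (∀ U : Set ℝ, IsOpen U → u ∈ U → τ U ≠ 0) ∧ u < x)
    (hlb : ∀ u : ℝ, (∀ U : Set ℝ, IsOpen U → u ∈ U → τ U ≠ 0) → a' ≤ (u : EReal))
    (hB2 : τ {s : ℝ | (s : EReal) ≤ a'} = 0)
    {x : ℝ} (hx : x ∈ s14I a' b') :
    ∃ y, y ∈ s14I a' b' ∧ y < x ∧ τ (Ioc y x) ≠ 0 := by
  obtain ⟨u, hu, hxu⟩ := hdense x hx.1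
  rcases lt_or_ge a' (u : EReal) with hub' | hub'
  · obtain ⟨y, h5, h6⟩ := EReal.exists_between_coe_real hub'
    have huy : y < u := EReal.coe_lt_coe_iff.1 h6
    refine ⟨y, ⟨h5, lt_trans (EReal.coe_lt_coe_iff.2 (lt_trans huy hxu)) hx.2⟩,
      lt_trans huy hxu, ?_⟩
    have hne : τ (Ioo y x) ≠ 0 := hu (Ioo y x) isOpen_Ioo ⟨huy, hxu⟩
    intro h0
    exact hne (le_antisymm (h0 ▸ measure_mono Ioo_subset_Ioc_self) zero_le)
  · have hb'u : a' = (u : EReal) := le_antisymm (hlb u hu) hub'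
    have h7 : τ (Ioo (u - 1) x) ≠ 0 := hu _ isOpen_Ioo ⟨by linarith, hxu⟩
    have hsplit : Ioo (u - 1) x ⊆ {s : ℝ | (s : EReal) ≤ a'} ∪ Ioo u x := by
      intro t ht
      rcases le_or_gt t u with h | h
      · exact Or.inl (by simp only [mem_setOf_eq, hb'u]; exact EReal.coe_le_coe_iff.2 h)
      · exact Or.inr ⟨h, ht.2⟩
    have h8 : τ (Ioo u x) ≠ 0 := by
      intro h0
      exact h7 (le_antisymm ((measure_mono hsplit).trans ((measure_union_le _ _).trans
        (by simp [h0, hB2]))) zero_le)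
    have hcover : Ioo u x ⊆ ⋃ k : ℕ, Ioc (u + (x - u) / (k + 1)) x := by
      intro t ht
      obtain ⟨k, hk⟩ := exists_nat_gt ((x - u) / (t - u))
      have htu : (0:ℝ) < t - u := by linarith [ht.1]
      have hk1 : (x - u) / (t - u) < (k : ℝ) + 1 := lt_trans hk (by linarith)
      have h9 : x - u < (t - u) * ((k : ℝ) + 1) := by
        have := (div_lt_iff₀ htu).1 hk1
        linarith [this]
      have hdiv : (x - u) / ((k : ℝ) + 1) < t - u := by
        rw [div_lt_iff₀ (by positivity)]
        linarith [h9]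
      exact mem_iUnion.2 ⟨k, ⟨by linarith [hdiv], ht.2.le⟩⟩
    have hex : ∃ k : ℕ, τ (Ioc (u + (x - u) / (k + 1)) x) ≠ 0 := by
      by_contra hall
      push_neg at hall
      exact h8 (le_antisymm ((measure_mono hcover).trans
        (le_of_eq (measure_iUnion_null hall))) zero_le)
    obtain ⟨k, hk⟩ := hex
    set y := u + (x - u) / ((k : ℝ) + 1) with hy
    have hxy : y < x := by
      by_contra h
      exact hk (by rw [Ioc_eq_empty (by simpa using h)]; simp)
    have hyu : u < y := by
      have : (0:ℝ) < (x - u) / ((k : ℝ) + 1) := div_pos (by linarith) (by positivity)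
      simp only [hy]; linarith
    exact ⟨y, ⟨hb'u ▸ EReal.coe_lt_coe_iff.2 hyu,
      lt_trans (EReal.coe_lt_coe_iff.2 hxy) hx.2⟩, hxy, hk⟩

section Claims

variable (h2 : ∀ p q : ℝ, a' < (p : EReal) → p < q → (q : EReal) < b' → τ (Ioo p q) < ⊤)
variable (hc : c ∈ s14I a' b')

lemma s14a_le {x : ℝ} (hx : x ∈ s14I a' b') :
    s14a τ a' b' c ≤ ((s14G τ c x : ℝ) : EReal) :=
  sInf_le (mem_image_of_mem _ hx)

lemma s14le_b {x : ℝ} (hx : x ∈ s14I a' b') :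
    ((s14G τ c x : ℝ) : EReal) ≤ s14b τ a' b' c :=
  le_sSup (mem_image_of_mem _ hx)

include h2 hc in
lemma s14a_lt {x : ℝ} (hx : x ∈ s14I a' b')
    (hright : ∃ y, y ∈ s14I a' b' ∧ x < y ∧ τ (Ioc x y) ≠ 0) :
    s14a τ a' b' c < ((s14G τ c x : ℝ) : EReal) := by
  obtain ⟨y, hyI, hxy, hne⟩ := hright
  have hdiff := s14Gdiff h2 hc hx hyI hxy.le
  have hpos : (0:ℝ) < (τ (Ioc x y)).toReal :=
    ENNReal.toReal_pos hne (s14fin h2 hx hyI)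
  have hlt : s14G τ c y < s14G τ c x := by linarith
  exact lt_of_le_of_lt (s14a_le hyI) (EReal.coe_lt_coe_iff.2 hlt)

include h2 hc in
lemma s14lt_b {x : ℝ} (hx : x ∈ s14I a' b')
    (hleft : ∃ y, y ∈ s14I a' b' ∧ y < x ∧ τ (Ioc y x) ≠ 0) :
    ((s14G τ c x : ℝ) : EReal) < s14b τ a' b' c := by
  obtain ⟨y, hyI, hxy, hne⟩ := hleft
  have hdiff := s14Gdiff h2 hc hyI hx hxy.le
  have hpos : (0:ℝ) < (τ (Ioc y x)).toReal :=
    ENNReal.toReal_pos hne (s14fin h2 hyI hx)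
  have hlt : s14G τ c x < s14G τ c y := by linarith
  exact lt_of_lt_of_le (EReal.coe_lt_coe_iff.2 hlt) (s14le_b hyI)

lemma s14E_nonempty {s : ℝ} (hs : (s : EReal) < s14b τ a' b' c) :
    (s14E τ a' b' c s).Nonempty := by
  obtain ⟨w, hw, hsw⟩ := lt_sSup_iff.1 hs
  obtain ⟨x, hxI, rfl⟩ := hw
  exact ⟨x, hxI, (EReal.coe_lt_coe_iff.1 hsw).le⟩

include h2 hc in
lemma s14E_bdd {s : ℝ} (hs : s14a τ a' b' c < (s : EReal)) :
    BddAbove (s14E τ a' b' c s) := by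
  obtain ⟨w, hw, hws⟩ := sInf_lt_iff.1 hs
  obtain ⟨x₁, hx₁I, rfl⟩ := hw
  have hG : s14G τ c x₁ < s := EReal.coe_lt_coe_iff.1 hws
  refine ⟨x₁, fun x hx => ?_⟩
  by_contra hgt
  push_neg at hgt
  exact absurd (le_trans hx.2 (s14G_anti h2 hc hx₁I hx.1 hgt.le)) (not_le.2 hG)

include h2 hc in
lemma s14f_le {s x₁ : ℝ} (hx₁ : x₁ ∈ s14I a' b') (hG : s14G τ c x₁ < s)
    (hsb : (s : EReal) < s14b τ a' b' c) : s14f τ a' b' c s ≤ x₁ := by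
  refine csSup_le (s14E_nonempty hsb) (fun x hx => ?_)
  by_contra hgt
  push_neg at hgt
  exact absurd (le_trans hx.2 (s14G_anti h2 hc hx₁ hx.1 hgt.le)) (not_le.2 hG)

include h2 hc in
lemma s14le_f {s x : ℝ} (hx : x ∈ s14I a' b') (hsG : s ≤ s14G τ c x)
    (hsa : s14a τ a' b' c < (s : EReal)) : x ≤ s14f τ a' b' c s :=
  le_csSup (s14E_bdd h2 hc hsa) ⟨hx, hsG⟩

include h2 hc in
lemma s14f_gt_imp {s x : ℝ} (hsb : (s : EReal) < s14b τ a' b' c)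
    (hx : x ∈ s14I a' b') (hlt : x < s14f τ a' b' c s) : s ≤ s14G τ c x := by
  have hex : ∃ x' ∈ s14E τ a' b' c s, x < x' := by
    by_contra h
    push_neg at h
    exact absurd (csSup_le (s14E_nonempty hsb) h) (not_le.2 hlt)
  obtain ⟨x', hx', hxx'⟩ := hex
  exact le_trans hx'.2 (s14G_anti h2 hc hx hx'.1 hxx'.le)

include h2 hc in
lemma s14lt_f {s x : ℝ} (hsa : s14a τ a' b' c < (s : EReal))
    (hx : x ∈ s14I a' b') (hG : s < s14G τ c x) : x < s14f τ a' b' c s := by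
  obtain ⟨y, hy1, hy2⟩ := EReal.exists_between_coe_real hx.2
  have hxy : x < y := EReal.coe_lt_coe_iff.1 hy1
  set g : ℕ → ℝ := fun k => x + (y - x) / ((k : ℝ) + 1) with hg
  have hgmem : ∀ k, g k ∈ s14I a' b' := by
    intro k
    have h1 : x < g k := by
      have : (0:ℝ) < (y - x) / ((k : ℝ) + 1) := div_pos (by linarith) (by positivity)
      simp only [hg]; linarith
    have h2' : g k ≤ y := by
      have : (y - x) / ((k : ℝ) + 1) ≤ y - x :=
        div_le_self (by linarith) (by push_cast; linarith [Nat.cast_nonneg (α := ℝ) k])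
      simp only [hg]; linarith
    exact ⟨lt_trans hx.1 (EReal.coe_lt_coe_iff.2 h1),
      lt_of_le_of_lt (EReal.coe_le_coe_iff.2 h2') hy2⟩
  have hanti : Antitone (fun k : ℕ => Ioc x (g k)) := by
    intro m n hmn
    apply Ioc_subset_Ioc le_rfl
    have : ((m : ℝ) + 1) ≤ ((n : ℝ) + 1) := by push_cast; exact_mod_cast by simpa using hmn
    simp only [hg]
    have := div_le_div_of_nonneg_left (by linarith : (0:ℝ) ≤ y - x) (by positivity : (0:ℝ) < (m:ℝ)+1) this
    linarith [this]
  have hint : ⋂ k : ℕ, Ioc x (g k) = ∅ := by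
    ext t
    simp only [mem_iInter, mem_Ioc, mem_empty_iff_false, iff_false, not_forall]
    by_contra hcon
    push_neg at hcon
    have h1 : x < t := (hcon 0).1
    obtain ⟨k, hk⟩ := exists_nat_gt ((y - x) / (t - x))
    have htx : (0:ℝ) < t - x := by linarith
    have hk1 : (y - x) / (t - x) < (k : ℝ) + 1 := lt_trans hk (by linarith)
    have h9 : y - x < (t - x) * ((k : ℝ) + 1) := by
      have := (div_lt_iff₀ htx).1 hk1
      linarith
    have hdiv : (y - x) / ((k : ℝ) + 1) < t - x := by
      rw [div_lt_iff₀ (by positivity)]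
      linarith
    have := (hcon k).2
    simp only [hg] at this
    linarith
  have htend : Tendsto (fun k : ℕ => τ (Ioc x (g k))) atTop (𝓝 0) := by
    have := tendsto_measure_iInter_atTop
      (μ := τ) (s := fun k : ℕ => Ioc x (g k))
      (fun k => measurableSet_Ioc.nullMeasurableSet) hanti
      ⟨0, s14fin h2 hx (hgmem 0)⟩
    rwa [hint, measure_empty] at this
  have hε : (0:ℝ≥0∞) < ENNReal.ofReal (s14G τ c x - s) := ENNReal.ofReal_pos.2 (by linarith)
  obtain ⟨k, hk⟩ := (htend.eventually_lt_const hε).exists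
  have hfin : τ (Ioc x (g k)) ≠ ⊤ := s14fin h2 hx (hgmem k)
  have htr : (τ (Ioc x (g k))).toReal < s14G τ c x - s :=
    ENNReal.toReal_lt_of_lt_ofReal hk
  have hdiff := s14Gdiff h2 hc hx (hgmem k) (by
    have : (0:ℝ) < (y - x) / ((k : ℝ) + 1) := div_pos (by linarith) (by positivity)
    simp only [hg]; linarith)
  have hGk : s ≤ s14G τ c (g k) := by linarith
  refine lt_of_lt_of_le ?_ (s14le_f h2 hc (hgmem k) hGk hsa)
  have : (0:ℝ) < (y - x) / ((k : ℝ) + 1) := div_pos (by linarith) (by positivity)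
  simp only [hg]; linarith

include h2 hc in
lemma s14G_le_of_f_le {s x : ℝ} (hsa : s14a τ a' b' c < (s : EReal))
    (hx : x ∈ s14I a' b') (hle : s14f τ a' b' c s ≤ x) : s14G τ c x ≤ s := by
  by_contra h
  push_neg at h
  exact absurd hle (not_le.2 (s14lt_f h2 hc hsa hx h))

include h2 hc in
lemma s14f_mem {s : ℝ} (hsa : s14a τ a' b' c < (s : EReal))
    (hsb : (s : EReal) < s14b τ a' b' c) : s14f τ a' b' c s ∈ s14I a' b' := by
  constructor
  · obtain ⟨x, hx⟩ := s14E_nonempty hsb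
    exact lt_of_lt_of_le hx.1.1
      (EReal.coe_le_coe_iff.2 (le_csSup (s14E_bdd h2 hc hsa) hx))
  · obtain ⟨w, hw, hws⟩ := sInf_lt_iff.1 hsa
    obtain ⟨x₁, hx₁I, rfl⟩ := hw
    have hG : s14G τ c x₁ < s := EReal.coe_lt_coe_iff.1 hws
    exact lt_of_le_of_lt (EReal.coe_le_coe_iff.2 (s14f_le h2 hc hx₁I hG hsb)) hx₁I.2

include h2 hc in
lemma s14f_anti : AntitoneOn (s14f τ a' b' c)
    {s : ℝ | s14a τ a' b' c < (s : EReal) ∧ (s : EReal) < s14b τ a' b' c} := by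
  intro s hs t ht hst
  refine csSup_le_csSup (s14E_bdd h2 hc hs.1) (s14E_nonempty ht.2) (fun x hx => ?_)
  exact ⟨hx.1, le_trans hst hx.2⟩

include h2 hc in
lemma s14f_meas : Measurable (s14f τ a' b' c) := by
  apply measurable_of_Iio
  intro r
  have hconst1 : ∀ s : ℝ, (s : EReal) ≤ s14a τ a' b' c →
      s14f τ a' b' c s = sSup (s14I a' b') := by
    intro s hs
    unfold s14f
    congr 1
    ext x
    exact ⟨fun h => h.1, fun h =>
      ⟨h, EReal.coe_le_coe_iff.1 (le_trans hs (s14a_le h))⟩⟩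
  have hconst3 : ∀ s : ℝ, s14b τ a' b' c < (s : EReal) → s14f τ a' b' c s = 0 := by
    intro s hs
    have hE : s14E τ a' b' c s = ∅ := by
      ext x
      simp only [s14E, mem_setOf_eq, mem_empty_iff_false, iff_false, not_and]
      intro hxI hsx
      exact absurd (lt_of_le_of_lt (le_trans (EReal.coe_le_coe_iff.2 hsx) (s14le_b hxI)) hs)
        (lt_irrefl _)
    rw [s14f, hE, Real.sSup_empty]
  have hcover : ∀ s : ℝ, ((s : EReal) ≤ s14a τ a' b' c) ∨
      ((s14a τ a' b' c < (s : EReal)) ∧ ((s : EReal) < s14b τ a' b' c)) ∨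
      ((s : EReal) = s14b τ a' b' c) ∨ (s14b τ a' b' c < (s : EReal)) := by
    intro s
    rcases le_or_gt (s : EReal) (s14a τ a' b' c) with h | h
    · exact Or.inl h
    · rcases lt_trichotomy ((s : EReal)) (s14b τ a' b' c) with h' | h' | h'
      · exact Or.inr (Or.inl ⟨h, h'⟩)
      · exact Or.inr (Or.inr (Or.inl h'))
      · exact Or.inr (Or.inr (Or.inr h'))
  have hdec : s14f τ a' b' c ⁻¹' Iio r =
      ({s : ℝ | (s : EReal) ≤ s14a τ a' b' c} ∩ s14f τ a' b' c ⁻¹' Iio r) ∪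
      (({s : ℝ | s14a τ a' b' c < (s : EReal) ∧ (s : EReal) < s14b τ a' b' c} ∩
          s14f τ a' b' c ⁻¹' Iio r) ∪
        (({s : ℝ | (s : EReal) = s14b τ a' b' c} ∩ s14f τ a' b' c ⁻¹' Iio r) ∪
          ({s : ℝ | s14b τ a' b' c < (s : EReal)} ∩ s14f τ a' b' c ⁻¹' Iio r))) := by
    ext s
    simp only [mem_union, mem_inter_iff, mem_setOf_eq]
    constructor
    · intro h
      rcases hcover s with h1 | h1 | h1 | h1 <;> tauto
    · intro h
      tauto
  rw [hdec]
  have hm1 : MeasurableSet {s : ℝ | (s : EReal) ≤ s14a τ a' b' c} :=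
    measurableSet_le measurable_coe_real_ereal measurable_const
  have hm3 : MeasurableSet {s : ℝ | s14b τ a' b' c < (s : EReal)} :=
    measurableSet_lt measurable_const measurable_coe_real_ereal
  refine MeasurableSet.union ?_ (MeasurableSet.union ?_ (MeasurableSet.union ?_ ?_))
  · by_cases hK : sSup (s14I a' b') < r
    · have heq : {s : ℝ | (s : EReal) ≤ s14a τ a' b' c} ∩ s14f τ a' b' c ⁻¹' Iio r =
          {s : ℝ | (s : EReal) ≤ s14a τ a' b' c} := by
        ext s
        exact ⟨fun h => h.1, fun h => ⟨h, by
          simp only [mem_preimage, mem_Iio, hconst1 s h]; exact hK⟩⟩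
      rw [heq]; exact hm1
    · have heq : {s : ℝ | (s : EReal) ≤ s14a τ a' b' c} ∩ s14f τ a' b' c ⁻¹' Iio r = ∅ := by
        ext s
        simp only [mem_inter_iff, mem_setOf_eq, mem_preimage, mem_Iio,
          mem_empty_iff_false, iff_false, not_and]
        intro hs
        rw [hconst1 s hs]
        exact fun h => hK h
      rw [heq]; exact MeasurableSet.empty
  · refine Set.OrdConnected.measurableSet ⟨fun p hp q hq t ht => ?_⟩
    have hpJ := hp.1
    have hqJ := hq.1
    have htJ : s14a τ a' b' c < (t : EReal) ∧ (t : EReal) < s14b τ a' b' c :=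
      ⟨lt_of_lt_of_le hpJ.1 (EReal.coe_le_coe_iff.2 ht.1),
       lt_of_le_of_lt (EReal.coe_le_coe_iff.2 ht.2) hqJ.2⟩
    refine ⟨htJ, ?_⟩
    have := s14f_anti h2 hc hpJ htJ ht.1
    exact lt_of_le_of_lt this hp.2
  · refine Set.Subsingleton.measurableSet (fun p hp q hq => ?_)
    exact EReal.coe_injective (hp.1.trans hq.1.symm)
  · by_cases h0 : (0:ℝ) < r
    · have heq : {s : ℝ | s14b τ a' b' c < (s : EReal)} ∩ s14f τ a' b' c ⁻¹' Iio r =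
          {s : ℝ | s14b τ a' b' c < (s : EReal)} := by
        ext s
        exact ⟨fun h => h.1, fun h => ⟨h, by
          simp only [mem_preimage, mem_Iio, hconst3 s h]; exact h0⟩⟩
      rw [heq]; exact hm3
    · have heq : {s : ℝ | s14b τ a' b' c < (s : EReal)} ∩ s14f τ a' b' c ⁻¹' Iio r = ∅ := by
        ext s
        simp only [mem_inter_iff, mem_setOf_eq, mem_preimage, mem_Iio,
          mem_empty_iff_false, iff_false, not_and]
        intro hs
        rw [hconst3 s hs]
        exact fun h => h0 h
      rw [heq]; exact MeasurableSet.empty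

include h2 hc in
lemma s14f_contleft {s : ℝ} (hsa : s14a τ a' b' c < (s : EReal))
    (hsb : (s : EReal) < s14b τ a' b' c) :
    ContinuousWithinAt (s14f τ a' b' c)
      ({t : ℝ | s14a τ a' b' c < (t : EReal) ∧ (t : EReal) < s14b τ a' b' c} ∩ Iic s) s := by
  rw [Metric.continuousWithinAt_iff]
  intro ε hε
  set x₂ := s14f τ a' b' c s + ε / 2 with hx₂
  have hfI := s14f_mem h2 hc hsa hsb
  rcases lt_or_ge (x₂ : EReal) b' with hx2b | hx2b
  · have hx₂I : x₂ ∈ s14I a' b' :=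
      ⟨lt_trans hfI.1 (EReal.coe_lt_coe_iff.2 (by simp only [hx₂]; linarith)), hx2b⟩
    have hGx₂ : s14G τ c x₂ < s := by
      by_contra h
      push_neg at h
      have := s14le_f h2 hc hx₂I h hsa
      simp only [hx₂] at this
      linarith
    refine ⟨s - s14G τ c x₂, by linarith, fun t ht hdist => ?_⟩
    have h1 : s14G τ c x₂ < t := by
      have := abs_lt.1 (by rwa [Real.dist_eq] at hdist)
      linarith [this.1]
    have hft_le : s14f τ a' b' c t ≤ x₂ := s14f_le h2 hc hx₂I h1 ht.1.2
    have hfs_le : s14f τ a' b' c s ≤ s14f τ a' b' c t := s14f_anti h2 hc ht.1 ⟨hsa, hsb⟩ ht.2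
    rw [Real.dist_eq, abs_of_nonneg (by linarith)]
    simp only [hx₂] at hft_le
    linarith
  · refine ⟨1, one_pos, fun t ht _ => ?_⟩
    have hft_le : s14f τ a' b' c t ≤ x₂ :=
      csSup_le (s14E_nonempty ht.1.2) (fun x hx =>
        le_of_lt (EReal.coe_lt_coe_iff.1 (lt_of_lt_of_le hx.1.2 hx2b)))
    have hfs_le : s14f τ a' b' c s ≤ s14f τ a' b' c t := s14f_anti h2 hc ht.1 ⟨hsa, hsb⟩ ht.2
    rw [Real.dist_eq, abs_of_nonneg (by linarith)]
    simp only [hx₂] at hft_le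
    linarith

end Claims

lemma s14tri (z : EReal) : z = ⊥ ∨ (∃ u : ℝ, z = (u : EReal)) ∨ z = ⊤ := by
  induction z using EReal.rec with
  | bot => exact Or.inl rfl
  | coe u => exact Or.inr (Or.inl ⟨u, rfl⟩)
  | top => exact Or.inr (Or.inr rfl)

lemma s14seq_left (hc : c ∈ s14I a' b') :
    ∃ x : ℕ → ℝ, Antitone x ∧ (∀ n, x n ∈ s14I a' b') ∧
      ∀ t ∈ s14I a' b', ∃ n, x n < t := by
  rcases s14tri a' with h | ⟨u, rfl⟩ | h
  · refine ⟨fun n => min (c - 1) (-(n : ℝ)), ?_, ?_, ?_⟩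
    · intro m n hmn
      exact min_le_min le_rfl (neg_le_neg (by exact_mod_cast hmn))
    · intro n
      refine ⟨h ▸ EReal.bot_lt_coe _, ?_⟩
      have : min (c - 1) (-(n : ℝ)) < c := lt_of_le_of_lt (min_le_left _ _) (by linarith)
      exact lt_trans (EReal.coe_lt_coe_iff.2 this) hc.2
    · intro t ht
      obtain ⟨n, hn⟩ := exists_nat_gt (-t)
      exact ⟨n, lt_of_le_of_lt (min_le_right _ _) (by linarith)⟩
  · have huc : u < c := EReal.coe_lt_coe_iff.1 hc.1
    refine ⟨fun n => u + (c - u) / ((n : ℝ) + 1), ?_, ?_, ?_⟩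
    · intro m n hmn
      have h1 : ((m : ℝ) + 1) ≤ ((n : ℝ) + 1) := by
        have : (m : ℝ) ≤ (n : ℝ) := by exact_mod_cast hmn
        linarith
      have := div_le_div_of_nonneg_left (by linarith : (0:ℝ) ≤ c - u)
        (by positivity : (0:ℝ) < (m : ℝ) + 1) h1
      simp only
      linarith
    · intro n
      have h1 : (0:ℝ) < (c - u) / ((n : ℝ) + 1) := div_pos (by linarith) (by positivity)
      have h2 : (c - u) / ((n : ℝ) + 1) ≤ c - u :=
        div_le_self (by linarith) (by linarith [Nat.cast_nonneg (α := ℝ) n])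
      exact ⟨EReal.coe_lt_coe_iff.2 (by linarith),
        lt_of_le_of_lt (EReal.coe_le_coe_iff.2 (by linarith)) hc.2⟩
    · intro t ht
      have hut : u < t := EReal.coe_lt_coe_iff.1 ht.1
      obtain ⟨n, hn⟩ := exists_nat_gt ((c - u) / (t - u))
      have htu : (0:ℝ) < t - u := by linarith
      have hk1 : (c - u) / (t - u) < (n : ℝ) + 1 := lt_trans hn (by linarith)
      have h9 : c - u < (t - u) * ((n : ℝ) + 1) := by
        have := (div_lt_iff₀ htu).1 hk1
        linarith
      have hdiv : (c - u) / ((n : ℝ) + 1) < t - u := by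
        rw [div_lt_iff₀ (by positivity)]
        linarith
      exact ⟨n, by linarith⟩
  · exact absurd (h ▸ hc.1) (not_top_lt)

lemma s14seq_right (hc : c ∈ s14I a' b') :
    ∃ y : ℕ → ℝ, Monotone y ∧ (∀ n, y n ∈ s14I a' b') ∧
      ∀ t ∈ s14I a' b', ∃ n, t < y n := by
  rcases s14tri b' with h | ⟨u, rfl⟩ | h
  · exact absurd (h ▸ hc.2) (not_lt_bot)
  · have huc : c < u := EReal.coe_lt_coe_iff.1 hc.2
    refine ⟨fun n => u - (u - c) / ((n : ℝ) + 1), ?_, ?_, ?_⟩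
    · intro m n hmn
      have h1 : ((m : ℝ) + 1) ≤ ((n : ℝ) + 1) := by
        have : (m : ℝ) ≤ (n : ℝ) := by exact_mod_cast hmn
        linarith
      have := div_le_div_of_nonneg_left (by linarith : (0:ℝ) ≤ u - c)
        (by positivity : (0:ℝ) < (m : ℝ) + 1) h1
      simp only
      linarith
    · intro n
      have h1 : (0:ℝ) < (u - c) / ((n : ℝ) + 1) := div_pos (by linarith) (by positivity)
      have h2 : (u - c) / ((n : ℝ) + 1) ≤ u - c :=
        div_le_self (by linarith) (by linarith [Nat.cast_nonneg (α := ℝ) n])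
      exact ⟨lt_of_lt_of_le hc.1 (EReal.coe_le_coe_iff.2 (by linarith)),
        EReal.coe_lt_coe_iff.2 (by linarith)⟩
    · intro t ht
      have hut : t < u := EReal.coe_lt_coe_iff.1 ht.2
      obtain ⟨n, hn⟩ := exists_nat_gt ((u - c) / (u - t))
      have htu : (0:ℝ) < u - t := by linarith
      have hk1 : (u - c) / (u - t) < (n : ℝ) + 1 := lt_trans hn (by linarith)
      have h9 : u - c < (u - t) * ((n : ℝ) + 1) := by
        have := (div_lt_iff₀ htu).1 hk1
        linarith
      have hdiv : (u - c) / ((n : ℝ) + 1) < u - t := by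
        rw [div_lt_iff₀ (by positivity)]
        linarith
      exact ⟨n, by linarith⟩
  · refine ⟨fun n => max (c + 1) (n : ℝ), ?_, ?_, ?_⟩
    · intro m n hmn
      exact max_le_max le_rfl (by exact_mod_cast hmn)
    · intro n
      refine ⟨?_, h ▸ EReal.coe_lt_top _⟩
      have : c < max (c + 1) (n : ℝ) := lt_of_lt_of_le (by linarith) (le_max_left _ _)
      exact lt_trans hc.1 (EReal.coe_lt_coe_iff.2 this)
    · intro t ht
      obtain ⟨n, hn⟩ := exists_nat_gt t
      exact ⟨n, lt_of_lt_of_le hn (le_max_right _ _)⟩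

section Main

variable (h2 : ∀ p q : ℝ, a' < (p : EReal) → p < q → (q : EReal) < b' → τ (Ioo p q) < ⊤)
variable (hc : c ∈ s14I a' b')
variable (hB4 : τ (s14I a' b')ᶜ = 0)
variable (hGa : ∀ x ∈ s14I a' b', s14a τ a' b' c < ((s14G τ c x : ℝ) : EReal))
variable (hGb : ∀ x ∈ s14I a' b', ((s14G τ c x : ℝ) : EReal) < s14b τ a' b' c)
variable {x y : ℕ → ℝ}
variable (hxa : Antitone x) (hxI : ∀ n, x n ∈ s14I a' b')
variable (hxcv : ∀ t ∈ s14I a' b', ∃ n, x n < t)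
variable (hym : Monotone y) (hyI : ∀ n, y n ∈ s14I a' b')
variable (hycv : ∀ t ∈ s14I a' b', ∃ n, t < y n)

include h2 hc hB4 hGa hGb hxa hxI hxcv hym hyI hycv in
lemma s14main {p q : ℝ} :
    τ (Ioc p q) = volume {s : ℝ | (s14a τ a' b' c < (s : EReal) ∧
      (s : EReal) < s14b τ a' b' c) ∧ s14f τ a' b' c s ∈ Ioc p q} := by
  by_cases hdeg : (q : EReal) ≤ a' ∨ b' ≤ (p : EReal)
  · have hτ0 : τ (Ioc p q) = 0 := by
      refine le_antisymm (le_trans (measure_mono ?_) (le_of_eq hB4)) zero_le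
      intro t ht
      simp only [s14I, mem_compl_iff, mem_setOf_eq, not_and_or, not_lt]
      rcases hdeg with h | h
      · exact Or.inl (le_trans (EReal.coe_le_coe_iff.2 ht.2) h)
      · exact Or.inr (le_trans h (EReal.coe_le_coe_iff.2 ht.1.le))
    have hv0 : {s : ℝ | (s14a τ a' b' c < (s : EReal) ∧
        (s : EReal) < s14b τ a' b' c) ∧ s14f τ a' b' c s ∈ Ioc p q} = ∅ := by
      ext s
      simp only [mem_setOf_eq, mem_empty_iff_false, iff_false, not_and]
      rintro ⟨hsa, hsb⟩ ⟨hps, hsq⟩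
      have hfI := s14f_mem h2 hc hsa hsb
      rcases hdeg with h | h
      · exact absurd (lt_of_lt_of_le hfI.1 (le_trans (EReal.coe_le_coe_iff.2 hsq) h))
          (lt_irrefl _)
      · exact absurd (lt_of_le_of_lt (le_trans h (EReal.coe_le_coe_iff.2 hps.le)) hfI.2)
          (lt_irrefl _)
    rw [hτ0, hv0]
    simp
  · push_neg at hdeg
    obtain ⟨ha'q, hpb'⟩ := hdeg
    set α : ℕ → ℝ := fun n => max p (x n) with hα
    set β : ℕ → ℝ := fun n => min q (y n) with hβ
    have hαI : ∀ n, α n ∈ s14I a' b' := by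
      intro n
      constructor
      · exact lt_of_lt_of_le (hxI n).1 (EReal.coe_le_coe_iff.2 (le_max_right _ _))
      · rcases max_choice p (x n) with h | h
        · rw [hα]; simp only; rw [h]; exact hpb'
        · rw [hα]; simp only; rw [h]; exact (hxI n).2
    have hβI : ∀ n, β n ∈ s14I a' b' := by
      intro n
      constructor
      · rcases min_choice q (y n) with h | h
        · rw [hβ]; simp only; rw [h]; exact ha'q
        · rw [hβ]; simp only; rw [h]; exact (hyI n).1
      · exact lt_of_le_of_lt (EReal.coe_le_coe_iff.2 (min_le_right _ _)) (hyI n).2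
    have hαanti : Antitone α := fun m n hmn => max_le_max le_rfl (hxa hmn)
    have hβmono : Monotone β := fun m n hmn => min_le_min le_rfl (hym hmn)
    have hm : ∀ n, τ (Ioc (α n) (β n)) =
        ENNReal.ofReal (s14G τ c (α n) - s14G τ c (β n)) := by
      intro n
      rcases lt_or_ge (α n) (β n) with h | h
      · rw [s14Gdiff h2 hc (hαI n) (hβI n) h.le]
        exact (ENNReal.ofReal_toReal (s14fin h2 (hαI n) (hβI n))).symm
      · rw [Ioc_eq_empty (not_lt.2 h), measure_empty]
        have hG : s14G τ c (α n) ≤ s14G τ c (β n) := s14G_anti h2 hc (hβI n) (hαI n) h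
        rw [eq_comm, ENNReal.ofReal_eq_zero]
        linarith
    have hIocI : Ioc p q ∩ s14I a' b' = ⋃ n, Ioc (α n) (β n) := by
      ext t
      constructor
      · rintro ⟨⟨hpt, htq⟩, htI⟩
        obtain ⟨n₁, h1⟩ := hxcv t htI
        obtain ⟨n₂, h2'⟩ := hycv t htI
        refine mem_iUnion.2 ⟨max n₁ n₂, ?_, ?_⟩
        · exact max_lt hpt (lt_of_le_of_lt (hxa (le_max_left _ _)) h1)
        · exact le_min htq (le_of_lt (lt_of_lt_of_le h2' (hym (le_max_right _ _))))
      · intro ht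
        obtain ⟨n, hn⟩ := mem_iUnion.1 ht
        refine ⟨⟨lt_of_le_of_lt (le_max_left _ _) hn.1, le_trans hn.2 (min_le_left _ _)⟩, ?_, ?_⟩
        · exact lt_trans (hαI n).1 (EReal.coe_lt_coe_iff.2 hn.1)
        · exact lt_of_le_of_lt (EReal.coe_le_coe_iff.2 hn.2) (hβI n).2
    have hτeq : τ (Ioc p q) = ⨆ n, τ (Ioc (α n) (β n)) := by
      rw [← measure_inter_conull (s := Ioc p q) hB4, hIocI]
      exact Monotone.measure_iUnion (fun m n hmn => Ioc_subset_Ioc (hαanti hmn) (hβmono hmn))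
    set BIG := {s : ℝ | (s14a τ a' b' c < (s : EReal) ∧
      (s : EReal) < s14b τ a' b' c) ∧ s14f τ a' b' c s ∈ Ioc p q} with hBIG
    have hupper : BIG ⊆ ⋃ n, Icc (s14G τ c (β n)) (s14G τ c (α n)) := by
      rintro s ⟨hsJ, hsf⟩
      have hfI := s14f_mem h2 hc hsJ.1 hsJ.2
      obtain ⟨n₁, h1⟩ := hxcv _ hfI
      obtain ⟨n₂, h2'⟩ := hycv _ hfI
      set n := max n₁ n₂ with hn
      have hαlt : α n < s14f τ a' b' c s :=
        max_lt hsf.1 (lt_of_le_of_lt (hxa (le_max_left _ _)) h1)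
      have hβge : s14f τ a' b' c s ≤ β n :=
        le_min hsf.2 (le_of_lt (lt_of_lt_of_le h2' (hym (le_max_right _ _))))
      refine mem_iUnion.2 ⟨n, ?_, ?_⟩
      · exact s14G_le_of_f_le h2 hc hsJ.1 (hβI n) hβge
      · exact s14f_gt_imp h2 hc hsJ.2 (hαI n) hαlt
    have hlower : ∀ n, Ioo (s14G τ c (β n)) (s14G τ c (α n)) ⊆ BIG := by
      intro n s hs
      have hsJ : s14a τ a' b' c < (s : EReal) ∧ (s : EReal) < s14b τ a' b' c :=
        ⟨lt_trans (hGa _ (hβI n)) (EReal.coe_lt_coe_iff.2 hs.1),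
         lt_trans (EReal.coe_lt_coe_iff.2 hs.2) (hGb _ (hαI n))⟩
      refine ⟨hsJ, ?_, ?_⟩
      · exact lt_of_le_of_lt (le_max_left _ _) (s14lt_f h2 hc hsJ.1 (hαI n) hs.2)
      · exact le_trans (s14f_le h2 hc (hβI n) hs.1 hsJ.2) (min_le_left _ _)
    have hvol : volume BIG = ⨆ n, τ (Ioc (α n) (β n)) := by
      refine le_antisymm ?_ ?_
      · refine le_trans (measure_mono hupper) (le_of_eq ?_)
        rw [Monotone.measure_iUnion]
        · congr 1
          ext n
          rw [Real.volume_Icc, hm n]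
        · intro m n hmn
          exact Icc_subset_Icc (s14G_anti h2 hc (hβI m) (hβI n) (hβmono hmn))
            (s14G_anti h2 hc (hαI n) (hαI m) (hαanti hmn))
      · refine iSup_le (fun n => ?_)
        rw [hm n, ← Real.volume_Ioo]
        exact measure_mono (hlower n)
    rw [hτeq, hvol]

end Main

end Stmt14Aux

/-- Every measure `τ` on `ℝ` satisfying Condition (B) is the `τ`-measure of some
function `f` on an interval `(a,b)` satisfying Condition (A). -/
theorem stmt_14 (τ : Measure ℝ) (hτ0 : τ ≠ 0)
    (a' b' : EReal)
    (ha' : a' = sInf {x : EReal | ∃ u : ℝ,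
      (∀ U : Set ℝ, IsOpen U → u ∈ U → τ U ≠ 0) ∧ x = (u : EReal)})
    (hb' : b' = sSup {x : EReal | ∃ u : ℝ,
      (∀ U : Set ℝ, IsOpen U → u ∈ U → τ U ≠ 0) ∧ x = (u : EReal)})
    (h1 : a' < b')
    (h2 : ∀ p q : ℝ, a' < (p : EReal) → p < q → (q : EReal) < b' → τ (Ioo p q) < ⊤)
    (h3 : ∀ u : ℝ, a' = (u : EReal) → τ {u} = 0)
    (h4 : ∀ u : ℝ, b' = (u : EReal) → τ {u} = 0) :
    ∃ (a b : EReal) (f : ℝ → ℝ), a < b ∧ Measurable f ∧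
      AntitoneOn f {s : ℝ | a < (s : EReal) ∧ (s : EReal) < b} ∧
      (∀ s : ℝ, a < (s : EReal) → (s : EReal) < b →
        ContinuousWithinAt f ({s : ℝ | a < (s : EReal) ∧ (s : EReal) < b} ∩ Iic s) s) ∧
      (∃ s t : ℝ, (a < (s : EReal) ∧ (s : EReal) < b) ∧
        (a < (t : EReal) ∧ (t : EReal) < b) ∧ f s ≠ f t) ∧
      (∀ s : ℝ, a < (s : EReal) → (s : EReal) < b →
        sInf {x : EReal | ∃ t : ℝ, (a < (t : EReal) ∧ (t : EReal) < b) ∧ x = (f t : EReal)}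
          < (f s : EReal) ∧
        (f s : EReal) <
          sSup {x : EReal | ∃ t : ℝ,
            (a < (t : EReal) ∧ (t : EReal) < b) ∧ x = (f t : EReal)}) ∧
      (∀ B : Set ℝ, MeasurableSet B →
        τ B = volume {s : ℝ | (a < (s : EReal) ∧ (s : EReal) < b) ∧ f s ∈ B}) := by
  obtain ⟨c, hc1, hc2⟩ := EReal.exists_between_coe_real h1
  have hc : c ∈ s14I a' b' := ⟨hc1, hc2⟩
  have hlb : ∀ u : ℝ, (∀ U : Set ℝ, IsOpen U → u ∈ U → τ U ≠ 0) → a' ≤ (u : EReal) :=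
    fun u hu => ha' ▸ sInf_le ⟨u, hu, rfl⟩
  have hub : ∀ u : ℝ, (∀ U : Set ℝ, IsOpen U → u ∈ U → τ U ≠ 0) → (u : EReal) ≤ b' :=
    fun u hu => hb' ▸ le_sSup ⟨u, hu, rfl⟩
  have hdenseR : ∀ z : ℝ, (z : EReal) < b' →
      ∃ u : ℝ, (∀ U : Set ℝ, IsOpen U → u ∈ U → τ U ≠ 0) ∧ z < u := by
    intro z hz
    rw [hb'] at hz
    obtain ⟨w, hw, h⟩ := lt_sSup_iff.1 hz
    obtain ⟨u, hu, rfl⟩ := hw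
    exact ⟨u, hu, EReal.coe_lt_coe_iff.1 h⟩
  have hdenseL : ∀ z : ℝ, a' < (z : EReal) →
      ∃ u : ℝ, (∀ U : Set ℝ, IsOpen U → u ∈ U → τ U ≠ 0) ∧ u < z := by
    intro z hz
    rw [ha'] at hz
    obtain ⟨w, hw, h⟩ := sInf_lt_iff.1 hz
    obtain ⟨u, hu, rfl⟩ := hw
    exact ⟨u, hu, EReal.coe_lt_coe_iff.1 h⟩
  have htriA : a' = ⊥ ∨ ∃ u : ℝ, a' = (u : EReal) := by
    rcases s14tri a' with h | h | h
    · exact Or.inl h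
    · exact Or.inr h
    · exact absurd (h ▸ h1) not_top_lt
  have htriB : b' = ⊤ ∨ ∃ u : ℝ, b' = (u : EReal) := by
    rcases s14tri b' with h | h | h
    · exact absurd (h ▸ h1) not_lt_bot
    · exact Or.inr h
    · exact Or.inl h
  have hB2 := s14left_null hlb h3 htriA
  have hB3 := s14right_null hub h4 htriB
  have hB4 := s14compl_null hB2 hB3
  have hGa : ∀ z ∈ s14I a' b', s14a τ a' b' c < ((s14G τ c z : ℝ) : EReal) :=
    fun z hz => s14a_lt h2 hc hz (s14exists_right hdenseR hub hB3 hz)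
  have hGb : ∀ z ∈ s14I a' b', ((s14G τ c z : ℝ) : EReal) < s14b τ a' b' c :=
    fun z hz => s14lt_b h2 hc hz (s14exists_left hdenseL hlb hB2 hz)
  obtain ⟨x, hxa, hxI, hxcv⟩ := s14seq_left hc
  obtain ⟨y, hym, hyI, hycv⟩ := s14seq_right hc
  refine ⟨s14a τ a' b' c, s14b τ a' b' c, s14f τ a' b' c,
    lt_of_lt_of_le (hGa c hc) (s14le_b hc), s14f_meas h2 hc, s14f_anti h2 hc,
    fun s hsa hsb => s14f_contleft h2 hc hsa hsb, ?_, ?_, ?_⟩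
  · -- non-constant
    obtain ⟨y₀, hy₀I, hcy₀, _⟩ := s14exists_right hdenseR hub hB3 hc
    obtain ⟨t, ht1, ht2⟩ := EReal.exists_between_coe_real (hGb c hc)
    obtain ⟨s, hs1, hs2⟩ := EReal.exists_between_coe_real (hGa y₀ hy₀I)
    have hsJ : s14a τ a' b' c < (s : EReal) ∧ (s : EReal) < s14b τ a' b' c :=
      ⟨hs1, lt_trans hs2 (hGb y₀ hy₀I)⟩
    have htJ : s14a τ a' b' c < (t : EReal) ∧ (t : EReal) < s14b τ a' b' c :=
      ⟨lt_trans (hGa c hc) ht1, ht2⟩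
    have hfs : y₀ ≤ s14f τ a' b' c s :=
      s14le_f h2 hc hy₀I (EReal.coe_lt_coe_iff.1 hs2).le hs1
    have hft : s14f τ a' b' c t ≤ c :=
      s14f_le h2 hc hc (EReal.coe_lt_coe_iff.1 ht1) ht2
    exact ⟨s, t, hsJ, htJ, ne_of_gt (lt_of_le_of_lt hft (lt_of_lt_of_le hcy₀ hfs))⟩
  · -- bounds
    intro s hsa hsb
    have hfI := s14f_mem h2 hc hsa hsb
    constructor
    · obtain ⟨y₁, hy₁I, hy₁lt, _⟩ := s14exists_left hdenseL hlb hB2 hfI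
      obtain ⟨t, ht1, ht2⟩ := EReal.exists_between_coe_real (hGb y₁ hy₁I)
      have htJ : s14a τ a' b' c < (t : EReal) ∧ (t : EReal) < s14b τ a' b' c :=
        ⟨lt_trans (hGa y₁ hy₁I) ht1, ht2⟩
      have hft : s14f τ a' b' c t ≤ y₁ :=
        s14f_le h2 hc hy₁I (EReal.coe_lt_coe_iff.1 ht1) ht2
      refine lt_of_le_of_lt (sInf_le ⟨t, htJ, rfl⟩) ?_
      exact EReal.coe_lt_coe_iff.2 (lt_of_le_of_lt hft hy₁lt)
    · obtain ⟨y₂, hy₂I, hy₂gt, _⟩ := s14exists_right hdenseR hub hB3 hfI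
      obtain ⟨t, ht1, ht2⟩ := EReal.exists_between_coe_real (hGa y₂ hy₂I)
      have htJ : s14a τ a' b' c < (t : EReal) ∧ (t : EReal) < s14b τ a' b' c :=
        ⟨ht1, lt_trans ht2 (hGb y₂ hy₂I)⟩
      have hft : y₂ ≤ s14f τ a' b' c t :=
        s14le_f h2 hc hy₂I (EReal.coe_lt_coe_iff.1 ht2).le ht1
      refine lt_of_lt_of_le ?_ (le_sSup ⟨t, htJ, rfl⟩)
      exact EReal.coe_lt_coe_iff.2 (lt_of_lt_of_le hy₂gt hft)
  · -- measure identity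
    have hfmeas := s14f_meas h2 hc
    have hJmeas : MeasurableSet {s : ℝ | s14a τ a' b' c < (s : EReal) ∧
        (s : EReal) < s14b τ a' b' c} := by
      have hj1 : MeasurableSet {s : ℝ | s14a τ a' b' c < (s : EReal)} :=
        measurableSet_lt measurable_const measurable_coe_real_ereal
      have hj2 : MeasurableSet {s : ℝ | (s : EReal) < s14b τ a' b' c} :=
        measurableSet_lt measurable_coe_real_ereal measurable_const
      exact hj1.inter hj2
    set ν : Measure ℝ := Measure.map (s14f τ a' b' c)
      (volume.restrict {s : ℝ | s14a τ a' b' c < (s : EReal) ∧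
        (s : EReal) < s14b τ a' b' c}) with hνdef
    have hν : ∀ B : Set ℝ, MeasurableSet B → ν B =
        volume {s : ℝ | (s14a τ a' b' c < (s : EReal) ∧
          (s : EReal) < s14b τ a' b' c) ∧ s14f τ a' b' c s ∈ B} := by
      intro B hB
      rw [hνdef, Measure.map_apply hfmeas hB, Measure.restrict_apply (hfmeas hB)]
      congr 1
      ext s
      simp only [mem_inter_iff, mem_preimage, mem_setOf_eq]
      exact and_comm
    have hmain : ∀ p q : ℝ, τ (Ioc p q) = ν (Ioc p q) := by
      intro p q
      rw [hν _ measurableSet_Ioc]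
      exact s14main h2 hc hB4 hGa hGb hxa hxI hxcv hym hyI hycv
    have hIoo : ∀ p q : ℝ, τ (Ioo p q) = ν (Ioo p q) := by
      intro p q
      rcases le_or_gt q p with h | h
      · rw [Ioo_eq_empty (not_lt.2 h)]; simp
      · have hcv : Ioo p q = ⋃ k : ℕ, Ioc p (q - (q - p) / ((k : ℝ) + 1)) := by
          ext t
          constructor
          · rintro ⟨ht1, ht2⟩
            obtain ⟨k, hk⟩ := exists_nat_gt ((q - p) / (q - t))
            have htq : (0:ℝ) < q - t := by linarith
            have hk1 : (q - p) / (q - t) < (k : ℝ) + 1 := lt_trans hk (by linarith)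
            have h9 : q - p < (q - t) * ((k : ℝ) + 1) := by
              have := (div_lt_iff₀ htq).1 hk1
              linarith
            have hdiv : (q - p) / ((k : ℝ) + 1) < q - t := by
              rw [div_lt_iff₀ (by positivity)]
              linarith
            exact mem_iUnion.2 ⟨k, ht1, by linarith⟩
          · intro ht
            obtain ⟨k, hk⟩ := mem_iUnion.1 ht
            have hpos : (0:ℝ) < (q - p) / ((k : ℝ) + 1) := div_pos (by linarith) (by positivity)
            exact ⟨hk.1, by linarith [hk.2]⟩
        have hmono : Monotone (fun k : ℕ => Ioc p (q - (q - p) / ((k : ℝ) + 1))) := by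
          intro m n hmn
          apply Ioc_subset_Ioc le_rfl
          have h1 : ((m : ℝ) + 1) ≤ ((n : ℝ) + 1) := by
            have : (m : ℝ) ≤ (n : ℝ) := by exact_mod_cast hmn
            linarith
          have := div_le_div_of_nonneg_left (by linarith : (0:ℝ) ≤ q - p)
            (by positivity : (0:ℝ) < (m : ℝ) + 1) h1
          linarith
        rw [hcv, Monotone.measure_iUnion hmono, Monotone.measure_iUnion hmono]
        exact iSup_congr (fun k => hmain p _)
    have hres : ∀ n : ℕ, τ.restrict (Ioo (x n) (y n)) = ν.restrict (Ioo (x n) (y n)) := by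
      intro n
      have hfin' : IsFiniteMeasure (τ.restrict (Ioo (x n) (y n))) := by
        constructor
        rw [Measure.restrict_apply_univ]
        rcases lt_or_ge (x n) (y n) with h | h
        · exact h2 _ _ (hxI n).1 h (hyI n).2
        · rw [Ioo_eq_empty (not_lt.2 h)]; simp
      haveI := hfin'
      refine Real.measure_ext_Ioo_rat (fun r1 r2 => ?_)
      rw [Measure.restrict_apply measurableSet_Ioo, Measure.restrict_apply measurableSet_Ioo,
        Ioo_inter_Ioo]
      exact hIoo _ _
    have hI_union : s14I a' b' = ⋃ n, Ioo (x n) (y n) := by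
      ext t
      constructor
      · intro ht
        obtain ⟨n₁, h1'⟩ := hxcv t ht
        obtain ⟨n₂, h2'⟩ := hycv t ht
        exact mem_iUnion.2 ⟨max n₁ n₂, lt_of_le_of_lt (hxa (le_max_left _ _)) h1',
          lt_of_lt_of_le h2' (hym (le_max_right _ _))⟩
      · intro ht
        obtain ⟨n, hn⟩ := mem_iUnion.1 ht
        exact ⟨lt_trans (hxI n).1 (EReal.coe_lt_coe_iff.2 hn.1),
          lt_trans (EReal.coe_lt_coe_iff.2 hn.2) (hyI n).2⟩
    have hImeas : MeasurableSet (s14I a' b') := by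
      have hj1 : MeasurableSet {s : ℝ | a' < (s : EReal)} :=
        measurableSet_lt measurable_const measurable_coe_real_ereal
      have hj2 : MeasurableSet {s : ℝ | (s : EReal) < b'} :=
        measurableSet_lt measurable_coe_real_ereal measurable_const
      exact hj1.inter hj2
    have hνcompl : ν (s14I a' b')ᶜ = 0 := by
      rw [hν _ hImeas.compl]
      have hempty : {s : ℝ | (s14a τ a' b' c < (s : EReal) ∧
          (s : EReal) < s14b τ a' b' c) ∧ s14f τ a' b' c s ∈ (s14I a' b')ᶜ} = ∅ := by
        ext s
        simp only [mem_setOf_eq, mem_compl_iff, mem_empty_iff_false, iff_false, not_and]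
        rintro ⟨hsa, hsb⟩
        exact fun h => h (s14f_mem h2 hc hsa hsb)
      rw [hempty]
      exact measure_empty
    intro B hB
    rw [← hν B hB]
    have hmono' : Monotone (fun n : ℕ => B ∩ Ioo (x n) (y n)) :=
      fun m n hmn => inter_subset_inter le_rfl (Ioo_subset_Ioo (hxa hmn) (hym hmn))
    have hτB : τ B = ⨆ n, τ (B ∩ Ioo (x n) (y n)) := by
      rw [← measure_inter_conull (s := B) hB4, hI_union, inter_iUnion]
      exact Monotone.measure_iUnion hmono'
    have hνB : ν B = ⨆ n, ν (B ∩ Ioo (x n) (y n)) := by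
      rw [← measure_inter_conull (s := B) hνcompl, hI_union, inter_iUnion]
      exact Monotone.measure_iUnion hmono'
    rw [hτB, hνB]
    refine iSup_congr (fun n => ?_)
    rw [← Measure.restrict_apply (μ := τ) hB, ← Measure.restrict_apply (μ := ν) hB, hres n]
end

section
/- Let f : (a,b) → ℝ be measurable with ∫_a^b 1_{f(s)≠0} ds < ∞ and ∫_a^b f(s)² ds < ∞. Then for every measure ν on ℝ^d with ν({0}) = 0 and ∫ (|x|² ∧ 1) ν(dx) < ∞, it holds that ∫_a^b ∫_{ℝ^d} (|f(s)x|² ∧ 1) ν(dx) ds < ∞. -/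
open MeasureTheory Set ENNReal

lemma min_mul_aux (k t : ℝ≥0∞) : min (k * t) 1 ≤ (k + 1) * min t 1 := by
  rcases le_total t 1 with ht | ht
  · rw [min_eq_left ht]
    calc min (k * t) 1 ≤ k * t := min_le_left _ _
    _ ≤ (k + 1) * t := by gcongr; exact le_self_add
  · rw [min_eq_right ht]
    calc min (k * t) 1 ≤ 1 := min_le_right _ _
    _ ≤ (k + 1) * 1 := by simp [le_add_right]

/-- If `∫_a^b 1_{f≠0} ds < ∞` and `∫_a^b f² ds < ∞`, then for every Lévy measure `ν`,
`∫_a^b ∫ (|f(s)x|² ∧ 1) ν(dx) ds < ∞`. -/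
theorem stmt_15 {d : ℕ} (a b : EReal) (f : ℝ → ℝ) (hmeas : Measurable f)
    (h1 : volume {s : ℝ | (a < (s : EReal) ∧ (s : EReal) < b) ∧ f s ≠ 0} < ⊤)
    (h2 : ∫⁻ s in {s : ℝ | a < (s : EReal) ∧ (s : EReal) < b},
      ENNReal.ofReal (f s ^ 2) < ⊤) :
    ∀ ν : Measure (EuclideanSpace ℝ (Fin d)), ν {0} = 0 →
      (∫⁻ x, min ((‖x‖₊ : ℝ≥0∞) ^ 2) 1 ∂ν) < ⊤ →
      (∫⁻ s in {s : ℝ | a < (s : EReal) ∧ (s : EReal) < b},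
        ∫⁻ x, min ((‖f s • x‖₊ : ℝ≥0∞) ^ 2) 1 ∂ν) < ⊤ := by
  intro ν hν0 hνC
  set I : Set ℝ := {s : ℝ | a < (s : EReal) ∧ (s : EReal) < b} with hI
  set C : ℝ≥0∞ := ∫⁻ x, min ((‖x‖₊ : ℝ≥0∞) ^ 2) 1 ∂ν with hC
  have hCne : C ≠ ⊤ := hνC.ne
  have hS : MeasurableSet {u : ℝ | f u ≠ 0} :=
    (hmeas (measurableSet_singleton 0)).compl
  have key : ∀ s : ℝ,
      (∫⁻ x, min ((‖f s • x‖₊ : ℝ≥0∞) ^ 2) 1 ∂ν)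
        ≤ ENNReal.ofReal (f s ^ 2) * C
          + Set.indicator {u : ℝ | f u ≠ 0} (fun _ => C) s := by
    intro s
    by_cases hfs : f s = 0
    · simp [hfs]
    · have hind : Set.indicator {u : ℝ | f u ≠ 0} (fun _ => C) s = C :=
        Set.indicator_of_mem (show s ∈ {u : ℝ | f u ≠ 0} from hfs) _
      rw [hind]
      have heq : ENNReal.ofReal (f s ^ 2) * C + C
          = (ENNReal.ofReal (f s ^ 2) + 1) * C := by ring
      rw [heq, hC, ← lintegral_const_mul' _ _ (by finiteness)]
      refine lintegral_mono fun x => ?_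
      have hnn : ((‖f s • x‖₊ : ℝ≥0∞)) ^ 2
          = ENNReal.ofReal (f s ^ 2) * (‖x‖₊ : ℝ≥0∞) ^ 2 := by
        rw [nnnorm_smul, ENNReal.coe_mul, mul_pow]
        congr 1
        rw [← enorm_eq_nnnorm, Real.enorm_eq_ofReal_abs, sq, sq, ← ENNReal.ofReal_mul (abs_nonneg _),
          abs_mul_abs_self]
      rw [hnn]
      exact min_mul_aux _ _
  calc (∫⁻ s in I, ∫⁻ x, min ((‖f s • x‖₊ : ℝ≥0∞) ^ 2) 1 ∂ν)
      ≤ ∫⁻ s in I, (ENNReal.ofReal (f s ^ 2) * C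
          + Set.indicator {u : ℝ | f u ≠ 0} (fun _ => C) s) :=
        lintegral_mono fun s => key s
    _ = (∫⁻ s in I, ENNReal.ofReal (f s ^ 2) * C)
          + ∫⁻ s in I, Set.indicator {u : ℝ | f u ≠ 0} (fun _ => C) s := by
        refine lintegral_add_left ?_ _
        exact ((ENNReal.measurable_ofReal.comp (hmeas.pow_const 2)).mul_const C)
    _ = (∫⁻ s in I, ENNReal.ofReal (f s ^ 2)) * C
          + C * volume ({u : ℝ | f u ≠ 0} ∩ I) := by
        rw [lintegral_mul_const' C _ hCne, lintegral_indicator hS, setLIntegral_const,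
          Measure.restrict_apply hS]
    _ < ⊤ := by
        apply ENNReal.add_lt_top.mpr
        constructor
        · exact ENNReal.mul_lt_top h2 hνC
        · refine ENNReal.mul_lt_top hνC ?_
          have : {u : ℝ | f u ≠ 0} ∩ I
              = {s : ℝ | (a < (s : EReal) ∧ (s : EReal) < b) ∧ f s ≠ 0} := by
            ext s; simp [hI, and_comm]
          rw [this]; exact h1
end

section
/- Let f : (a,b) → ℝ be measurable and locally integrable with ∫_a^b (f(s)² ∧ 1) ds = ∞. Then for every nonzero measure ν on ℝ^d with ν({0}) = 0 and ∫ (|x|² ∧ 1) ν(dx) < ∞, it holds that ∫_a^b ∫_{ℝ^d} (|f(s)x|² ∧ 1) ν(dx) ds = ∞. -/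
open MeasureTheory Set ENNReal

lemma ofReal_min' (a b : ℝ) :
    ENNReal.ofReal (min a b) = min (ENNReal.ofReal a) (ENNReal.ofReal b) :=
  Monotone.map_min (fun _ _ h => ENNReal.ofReal_le_ofReal h)

lemma aux_real (c t u : ℝ) (hc0 : 0 < c) (hc1 : c ≤ 1) (hu : c ≤ u) :
    c ^ 2 * min (t ^ 2) 1 ≤ min ((|t| * u) ^ 2) 1 := by
  have h : c ^ 2 * min (t ^ 2) 1 = min (c ^ 2 * t ^ 2) (c ^ 2 * 1) :=
    (mul_min_of_nonneg _ _ (by positivity))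
  rw [h]
  apply le_min
  · refine le_trans (min_le_left _ _) ?_
    have hu2 : c ^ 2 ≤ u ^ 2 := by nlinarith
    have : (|t| * u) ^ 2 = t ^ 2 * u ^ 2 := by rw [mul_pow, sq_abs]
    rw [this]
    nlinarith [sq_nonneg t]
  · refine le_trans (min_le_right _ _) ?_
    nlinarith

/-- If `f` is locally integrable on `(a,b)` and `∫_a^b (f² ∧ 1) ds = ∞`, then for every
nonzero Lévy measure `ν`, `∫_a^b ∫ (|f(s)x|² ∧ 1) ν(dx) ds = ∞`. -/
theorem stmt_18 {d : ℕ} (a b : EReal) (hab : a < b) (f : ℝ → ℝ) (hmeas : Measurable f)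
    (hloc : ∀ p q : ℝ, a < (p : EReal) → p < q → (q : EReal) < b →
      IntegrableOn f (Icc p q) volume)
    (hdiv : ∫⁻ s in {s : ℝ | a < (s : EReal) ∧ (s : EReal) < b},
      min (ENNReal.ofReal (f s ^ 2)) 1 = ⊤) :
    ∀ ν : Measure (EuclideanSpace ℝ (Fin d)), ν ≠ 0 → ν {0} = 0 →
      (∫⁻ x, min ((‖x‖₊ : ℝ≥0∞) ^ 2) 1 ∂ν) < ⊤ →
      (∫⁻ s in {s : ℝ | a < (s : EReal) ∧ (s : EReal) < b},
        ∫⁻ x, min ((‖f s • x‖₊ : ℝ≥0∞) ^ 2) 1 ∂ν) = ⊤ := by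
  intro ν hν0 hν00 _hint
  set E := EuclideanSpace ℝ (Fin d)
  -- find c ∈ (0,1] with ν {x | c ≤ ‖x‖} ≠ 0
  obtain ⟨n, hn⟩ : ∃ n : ℕ, ν {x : E | 1 / (n + 1) ≤ ‖x‖} ≠ 0 := by
    by_contra h
    push_neg at h
    have hsub : ({0}ᶜ : Set E) ⊆ ⋃ n : ℕ, {x : E | 1 / (n + 1) ≤ ‖x‖} := by
      intro x hx
      have hx0 : 0 < ‖x‖ := norm_pos_iff.mpr hx
      obtain ⟨n, hn⟩ := exists_nat_one_div_lt hx0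
      exact mem_iUnion.mpr ⟨n, le_of_lt hn⟩
    have h1 : ν ({0}ᶜ : Set E) = 0 :=
      measure_mono_null hsub (measure_iUnion_null h)
    have huniv : ν (univ : Set E) = 0 := by
      have : (univ : Set E) = {0} ∪ {0}ᶜ := (union_compl_self _).symm
      rw [this]
      exact le_antisymm (le_trans (measure_union_le _ _) (by simp [hν00, h1])) bot_le
    exact hν0 (Measure.measure_univ_eq_zero.mp huniv)
  set c : ℝ := 1 / (n + 1) with hc
  have hc0 : 0 < c := by positivity
  have hc1 : c ≤ 1 := by
    rw [hc, div_le_one (by positivity)]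
    linarith [Nat.cast_nonneg (α := ℝ) n]
  set C : Set E := {x : E | c ≤ ‖x‖} with hCdef
  set K : ℝ≥0∞ := ENNReal.ofReal (c ^ 2) * ν C with hK
  have hKne : K ≠ 0 := by
    rw [hK]
    exact mul_ne_zero (by simp [ENNReal.ofReal_eq_zero]; positivity) hn
  -- pointwise inner bound
  have hinner : ∀ s : ℝ,
      K * min (ENNReal.ofReal (f s ^ 2)) 1 ≤
        ∫⁻ x, min ((‖f s • x‖₊ : ℝ≥0∞) ^ 2) 1 ∂ν := by
    intro s
    have hmg : Measurable fun x : E => min ((‖f s • x‖₊ : ℝ≥0∞) ^ 2) 1 := by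
      fun_prop
    calc K * min (ENNReal.ofReal (f s ^ 2)) 1
        = (ENNReal.ofReal (c ^ 2) * min (ENNReal.ofReal (f s ^ 2)) 1) * ν C := by
          rw [hK]; ring
      _ = ∫⁻ _ in C, ENNReal.ofReal (c ^ 2) * min (ENNReal.ofReal (f s ^ 2)) 1 ∂ν := by
          rw [setLIntegral_const]
      _ ≤ ∫⁻ x in C, min ((‖f s • x‖₊ : ℝ≥0∞) ^ 2) 1 ∂ν := by
          apply setLIntegral_mono hmg
          intro x hx
          have hx' : c ≤ ‖x‖ := hx
          have hnorm : ‖f s • x‖ = |f s| * ‖x‖ := by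
            rw [norm_smul, Real.norm_eq_abs]
          have key := aux_real c (f s) ‖x‖ hc0 hc1 hx'
          calc ENNReal.ofReal (c ^ 2) * min (ENNReal.ofReal (f s ^ 2)) 1
              = ENNReal.ofReal (c ^ 2 * min (f s ^ 2) 1) := by
                rw [ENNReal.ofReal_mul (by positivity)]
                congr 1
                rw [← ENNReal.ofReal_one, ← ofReal_min']
            _ ≤ ENNReal.ofReal (min ((|f s| * ‖x‖) ^ 2) 1) := ENNReal.ofReal_le_ofReal key
            _ = min ((‖f s • x‖₊ : ℝ≥0∞) ^ 2) 1 := by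
                rw [ofReal_min', ENNReal.ofReal_one, ← hnorm]
                congr 1
                rw [← Real.rpow_natCast, ← ENNReal.ofReal_rpow_of_nonneg (norm_nonneg _)
                  (by norm_num)]
                simp [← Real.enorm_eq_ofReal_abs, ENNReal.rpow_natCast,
                  ofReal_norm, enorm_eq_nnnorm]
      _ ≤ ∫⁻ x, min ((‖f s • x‖₊ : ℝ≥0∞) ^ 2) 1 ∂ν := setLIntegral_le_lintegral _ _
  -- conclude
  rw [eq_top_iff]
  calc (⊤ : ℝ≥0∞) = K * ⊤ := (ENNReal.mul_top hKne).symm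
    _ = K * ∫⁻ s in {s : ℝ | a < (s : EReal) ∧ (s : EReal) < b},
          min (ENNReal.ofReal (f s ^ 2)) 1 := by rw [hdiv]
    _ = ∫⁻ s in {s : ℝ | a < (s : EReal) ∧ (s : EReal) < b},
          K * min (ENNReal.ofReal (f s ^ 2)) 1 := by
        rw [lintegral_const_mul]
        fun_prop
    _ ≤ _ := lintegral_mono fun s => hinner s
end

section
/- Let f : (a,b) → ℝ be measurable with ∫_a^b 1_{f(s)≠0} ds < ∞ and such that k(r) = ∫_a^b f(s)² 1_{|f(s)| ≤ 1/r} ds = O(1/r) and h(r) = ∫_a^b 1_{|f(s)| > 1/r} ds = O(r) as r ↓ 0. Then for every measure ν on ℝ^d with ν({0}) = 0 and ∫ (|x| ∧ 1) ν(dx) < ∞, it holds that ∫_a^b ∫_{ℝ^d} (|f(s)x|² ∧ 1) ν(dx) ds < ∞. -/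
open MeasureTheory Set ENNReal

lemma ofReal_norm_eq_coe_nnnorm {E : Type*} [SeminormedAddGroup E] (a : E) :
    ENNReal.ofReal ‖a‖ = (‖a‖₊ : ℝ≥0∞) :=
  ENNReal.ofReal_eq_coe_nnreal _

lemma aux_finite {d : ℕ} (ν : Measure (EuclideanSpace ℝ (Fin d)))
    (hν : (∫⁻ x, min (‖x‖₊ : ℝ≥0∞) 1 ∂ν) < ⊤) {ε : ℝ} (hε : 0 < ε) :
    ν {x | ε < ‖x‖} < ⊤ := by
  by_contra h
  push_neg at h
  have htop : ν {x | ε < ‖x‖} = ⊤ := top_le_iff.mp h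
  have hlow : ENNReal.ofReal (min ε 1) * ν {x | ε < ‖x‖}
      ≤ ∫⁻ x, min (‖x‖₊ : ℝ≥0∞) 1 ∂ν := by
    calc ENNReal.ofReal (min ε 1) * ν {x | ε < ‖x‖}
        = ∫⁻ _ in {x | ε < ‖x‖}, ENNReal.ofReal (min ε 1) ∂ν := by
          rw [setLIntegral_const]
      _ ≤ ∫⁻ x in {x | ε < ‖x‖}, min (‖x‖₊ : ℝ≥0∞) 1 ∂ν := by
          refine setLIntegral_mono (by fun_prop) fun x hx => ?_
          refine le_min ?_ ?_
          · rw [← ofReal_norm_eq_coe_nnnorm]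
            exact ENNReal.ofReal_le_ofReal ((min_le_left _ _).trans hx.le)
          · calc ENNReal.ofReal (min ε 1) ≤ ENNReal.ofReal 1 :=
                ENNReal.ofReal_le_ofReal (min_le_right _ _)
              _ = 1 := ENNReal.ofReal_one
      _ ≤ ∫⁻ x, min (‖x‖₊ : ℝ≥0∞) 1 ∂ν := setLIntegral_le_lintegral _ _
  rw [htop, ENNReal.mul_top (by simp [ENNReal.ofReal_eq_zero]; positivity)] at hlow
  exact (lt_irrefl _ (lt_of_le_of_lt hlow hν)).elim

lemma aux_sigmaFinite {d : ℕ} (ν : Measure (EuclideanSpace ℝ (Fin d)))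
    (hν0 : ν {0} = 0)
    (hν : (∫⁻ x, min (‖x‖₊ : ℝ≥0∞) 1 ∂ν) < ⊤) : SigmaFinite ν := by
  refine ⟨⟨⟨fun n => {0} ∪ {x | 1/(n+1 : ℝ) < ‖x‖}, fun _ => trivial, fun n => ?_, ?_⟩⟩⟩
  · refine lt_of_le_of_lt (measure_union_le _ _) ?_
    rw [hν0, zero_add]
    exact aux_finite ν hν (by positivity)
  · ext x
    simp only [mem_iUnion, mem_univ, iff_true]
    rcases eq_or_ne x 0 with h | h
    · exact ⟨0, Or.inl (by simp [h])⟩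
    · obtain ⟨n, hn⟩ := exists_nat_one_div_lt (norm_pos_iff.mpr h)
      exact ⟨n, Or.inr hn⟩

/-- If `∫_a^b 1_{f≠0} ds < ∞`, `k(r) = ∫_a^b f² 1_{|f|≤1/r} ds = O(1/r)` and
`h(r) = ∫_a^b 1_{|f|>1/r} ds = O(r)` as `r ↓ 0`, then for every Lévy measure `ν`
of type A or B, `∫_a^b ∫ (|f(s)x|² ∧ 1) ν(dx) ds < ∞`. -/
theorem stmt_19 {d : ℕ} (a b : EReal) (f : ℝ → ℝ) (hmeas : Measurable f)
    (h0 : volume {s : ℝ | (a < (s : EReal) ∧ (s : EReal) < b) ∧ f s ≠ 0} < ⊤)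
    (hk : ∃ C : ℝ, 0 < C ∧ ∃ r₀ : ℝ, 0 < r₀ ∧ ∀ r : ℝ, 0 < r → r ≤ r₀ →
      (∫⁻ s in {s : ℝ | (a < (s : EReal) ∧ (s : EReal) < b) ∧ |f s| ≤ 1 / r},
        ENNReal.ofReal (f s ^ 2)) ≤ ENNReal.ofReal (C / r))
    (hh : ∃ C : ℝ, 0 < C ∧ ∃ r₀ : ℝ, 0 < r₀ ∧ ∀ r : ℝ, 0 < r → r ≤ r₀ →
      volume {s : ℝ | (a < (s : EReal) ∧ (s : EReal) < b) ∧ 1 / r < |f s|} ≤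
        ENNReal.ofReal (C * r)) :
    ∀ ν : Measure (EuclideanSpace ℝ (Fin d)), ν {0} = 0 →
      (∫⁻ x, min (‖x‖₊ : ℝ≥0∞) 1 ∂ν) < ⊤ →
      (∫⁻ s in {s : ℝ | a < (s : EReal) ∧ (s : EReal) < b},
        ∫⁻ x, min ((‖f s • x‖₊ : ℝ≥0∞) ^ 2) 1 ∂ν) < ⊤ := by
  obtain ⟨C₁, hC₁, r₁, hr₁, hk⟩ := hk
  obtain ⟨C₂, hC₂, r₂, hr₂, hh⟩ := hh
  intro ν hν0 hν1
  haveI : SigmaFinite ν := aux_sigmaFinite ν hν0 hν1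
  set S : Set ℝ := {s : ℝ | a < (s : EReal) ∧ (s : EReal) < b} with hSdef
  have hS : MeasurableSet S := measurable_coe_real_ereal measurableSet_Ioo
  set r₀ : ℝ := min (min r₁ r₂) 1 with hr₀def
  have hr₀ : 0 < r₀ := lt_min (lt_min hr₁ hr₂) one_pos
  have hr₀1 : r₀ ≤ 1 := min_le_right _ _
  set M : ℝ≥0∞ := volume {s : ℝ | (a < (s : EReal) ∧ (s : EReal) < b) ∧ f s ≠ 0} with hMdef
  set K : ℝ≥0∞ := ENNReal.ofReal (C₁ + C₂) + M / ENNReal.ofReal r₀ with hKdef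
  have hKtop : K ≠ ⊤ := by
    refine (ENNReal.add_lt_top.mpr ⟨ENNReal.ofReal_lt_top, ?_⟩).ne
    exact ENNReal.div_lt_top h0.ne (by simp [ENNReal.ofReal_eq_zero]; positivity)
  -- pointwise bound
  have key : ∀ x : EuclideanSpace ℝ (Fin d),
      (∫⁻ s in S, min (((‖f s‖₊ : ℝ≥0∞) * (‖x‖₊ : ℝ≥0∞)) ^ 2) 1)
        ≤ K * min (‖x‖₊ : ℝ≥0∞) 1 := by
    intro x
    rcases eq_or_lt_of_le (norm_nonneg x) with hx0 | hx
    · have : ‖x‖₊ = 0 := by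
        simpa [nnnorm_eq_zero] using (norm_eq_zero.mp hx0.symm)
      simp [this]
    rcases le_or_gt ‖x‖ r₀ with hxr | hxr
    · -- small norm case
      set r : ℝ := ‖x‖ with hrdef
      have hxnn : (‖x‖₊ : ℝ≥0∞) = ENNReal.ofReal r := (ofReal_norm_eq_coe_nnnorm x).symm
      set A : Set ℝ := {s : ℝ | (a < (s : EReal) ∧ (s : EReal) < b) ∧ |f s| ≤ 1 / r} with hAdef
      set B : Set ℝ := {s : ℝ | (a < (s : EReal) ∧ (s : EReal) < b) ∧ 1 / r < |f s|} with hBdef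
      have hSAB : S = A ∪ B := by
        ext s
        simp only [hSdef, hAdef, hBdef, mem_setOf_eq, mem_union]
        constructor
        · intro hs
          rcases le_or_gt (|f s|) (1/r) with h | h
          exacts [Or.inl ⟨hs, h⟩, Or.inr ⟨hs, h⟩]
        · rintro (⟨hs, _⟩ | ⟨hs, _⟩) <;> exact hs
      have hB : MeasurableSet B := hS.inter (measurableSet_lt measurable_const hmeas.abs)
      have hdisj : Disjoint A B := by
        rw [Set.disjoint_left]
        rintro s ⟨_, h1⟩ ⟨_, h2⟩
        exact absurd h2 (not_lt.mpr h1)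
      have hAbound : (∫⁻ s in A, min (((‖f s‖₊ : ℝ≥0∞) * (‖x‖₊ : ℝ≥0∞)) ^ 2) 1)
          ≤ ENNReal.ofReal (C₁ * r) := by
        have step : ∀ s : ℝ, min (((‖f s‖₊ : ℝ≥0∞) * (‖x‖₊ : ℝ≥0∞)) ^ 2) 1
            ≤ ENNReal.ofReal (f s ^ 2) * ENNReal.ofReal (r ^ 2) := by
          intro s
          refine le_trans (min_le_left _ _) (le_of_eq ?_)
          rw [← ofReal_norm_eq_coe_nnnorm (f s), hxnn, ← ENNReal.ofReal_mul (norm_nonneg _),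
            ← ENNReal.ofReal_pow (by positivity), ← ENNReal.ofReal_mul (by positivity)]
          congr 1
          rw [Real.norm_eq_abs]
          rw [mul_pow, sq_abs]
        calc (∫⁻ s in A, min (((‖f s‖₊ : ℝ≥0∞) * (‖x‖₊ : ℝ≥0∞)) ^ 2) 1)
            ≤ ∫⁻ s in A, ENNReal.ofReal (f s ^ 2) * ENNReal.ofReal (r ^ 2) :=
              lintegral_mono fun s => step s
          _ = (∫⁻ s in A, ENNReal.ofReal (f s ^ 2)) * ENNReal.ofReal (r ^ 2) :=
              lintegral_mul_const' _ _ ENNReal.ofReal_ne_top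
          _ ≤ ENNReal.ofReal (C₁ / r) * ENNReal.ofReal (r ^ 2) := by
              refine mul_le_mul_left ?_ _
              exact hk r hx (hxr.trans ((min_le_left _ _).trans (min_le_left _ _)))
          _ = ENNReal.ofReal (C₁ * r) := by
              rw [← ENNReal.ofReal_mul (by positivity)]
              congr 1
              field_simp
      have hBbound : (∫⁻ s in B, min (((‖f s‖₊ : ℝ≥0∞) * (‖x‖₊ : ℝ≥0∞)) ^ 2) 1)
          ≤ ENNReal.ofReal (C₂ * r) := by
        calc (∫⁻ s in B, min (((‖f s‖₊ : ℝ≥0∞) * (‖x‖₊ : ℝ≥0∞)) ^ 2) 1)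
            ≤ ∫⁻ _ in B, 1 := lintegral_mono fun s => min_le_right _ _
          _ = volume B := by rw [setLIntegral_one]
          _ ≤ ENNReal.ofReal (C₂ * r) :=
              hh r hx (hxr.trans ((min_le_left _ _).trans (min_le_right _ _)))
      have hmin : min (‖x‖₊ : ℝ≥0∞) 1 = ENNReal.ofReal r := by
        rw [hxnn]
        exact min_eq_left (by simpa using ENNReal.ofReal_le_ofReal (hxr.trans hr₀1))
      calc (∫⁻ s in S, min (((‖f s‖₊ : ℝ≥0∞) * (‖x‖₊ : ℝ≥0∞)) ^ 2) 1)
          = (∫⁻ s in A, min (((‖f s‖₊ : ℝ≥0∞) * (‖x‖₊ : ℝ≥0∞)) ^ 2) 1)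
            + ∫⁻ s in B, min (((‖f s‖₊ : ℝ≥0∞) * (‖x‖₊ : ℝ≥0∞)) ^ 2) 1 := by
            rw [hSAB, lintegral_union hB hdisj]
        _ ≤ ENNReal.ofReal (C₁ * r) + ENNReal.ofReal (C₂ * r) := add_le_add hAbound hBbound
        _ = ENNReal.ofReal (C₁ + C₂) * ENNReal.ofReal r := by
            rw [← ENNReal.ofReal_add (by positivity) (by positivity),
              ← ENNReal.ofReal_mul (by positivity)]
            ring_nf
        _ ≤ K * min (‖x‖₊ : ℝ≥0∞) 1 := by
            rw [hmin]
            exact mul_le_mul_left le_self_add _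
    · -- large norm case
      have hbig : (∫⁻ s in S, min (((‖f s‖₊ : ℝ≥0∞) * (‖x‖₊ : ℝ≥0∞)) ^ 2) 1) ≤ M := by
        have hT : MeasurableSet {s : ℝ | f s ≠ 0} :=
          (hmeas (measurableSet_singleton 0)).compl
        calc (∫⁻ s in S, min (((‖f s‖₊ : ℝ≥0∞) * (‖x‖₊ : ℝ≥0∞)) ^ 2) 1)
            ≤ ∫⁻ s in S, {s : ℝ | f s ≠ 0}.indicator (fun _ => 1) s := by
              refine lintegral_mono fun s => ?_
              rcases eq_or_ne (f s) 0 with h | h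
              · simp [h]
              · simp only [indicator_of_mem (show s ∈ {s : ℝ | f s ≠ 0} from h)]
                exact min_le_right _ _
          _ = volume ({s : ℝ | f s ≠ 0} ∩ S) := by
              rw [lintegral_indicator hT, setLIntegral_one, Measure.restrict_apply hT]
          _ = M := by
              rw [hMdef]
              congr 1
              ext s
              simp only [mem_inter_iff, mem_setOf_eq, hSdef]
              tauto
      refine hbig.trans ?_
      have hminge : ENNReal.ofReal r₀ ≤ min (‖x‖₊ : ℝ≥0∞) 1 := by
        refine le_min ?_ (by simpa using ENNReal.ofReal_le_ofReal hr₀1)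
        rw [← ofReal_norm_eq_coe_nnnorm]
        exact ENNReal.ofReal_le_ofReal hxr.le
      calc M = M / ENNReal.ofReal r₀ * ENNReal.ofReal r₀ :=
            (ENNReal.div_mul_cancel (by simp [ENNReal.ofReal_eq_zero]; positivity)
              ENNReal.ofReal_ne_top).symm
        _ ≤ K * min (‖x‖₊ : ℝ≥0∞) 1 :=
            mul_le_mul' le_add_self hminge
  -- main computation
  have hmeas2 : Measurable (Function.uncurry fun (s : ℝ) (x : EuclideanSpace ℝ (Fin d)) =>
      min (((‖f s‖₊ : ℝ≥0∞) * (‖x‖₊ : ℝ≥0∞)) ^ 2) 1) := by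
    apply Measurable.min _ measurable_const
    apply Measurable.pow_const
    exact ((hmeas.nnnorm.coe_nnreal_ennreal).comp measurable_fst).mul
      ((measurable_nnnorm.coe_nnreal_ennreal).comp measurable_snd)
  have hrw : (∫⁻ s in S, ∫⁻ x, min ((‖f s • x‖₊ : ℝ≥0∞) ^ 2) 1 ∂ν)
      = ∫⁻ s in S, ∫⁻ x, min (((‖f s‖₊ : ℝ≥0∞) * (‖x‖₊ : ℝ≥0∞)) ^ 2) 1 ∂ν := by
    simp_rw [nnnorm_smul, ENNReal.coe_mul]
  rw [hrw, lintegral_lintegral_swap hmeas2.aemeasurable]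
  calc (∫⁻ x, (∫⁻ s in S, min (((‖f s‖₊ : ℝ≥0∞) * (‖x‖₊ : ℝ≥0∞)) ^ 2) 1) ∂ν)
      ≤ ∫⁻ x, K * min (‖x‖₊ : ℝ≥0∞) 1 ∂ν := lintegral_mono key
    _ = K * ∫⁻ x, min (‖x‖₊ : ℝ≥0∞) 1 ∂ν := lintegral_const_mul' _ _ hKtop
    _ < ⊤ := ENNReal.mul_lt_top hKtop.lt_top hν1
end
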